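/- arXiv:0710.0442 — 4 statements merged into one kernel-verified Lean document; each statement's English description precedes it below -/
import Mathlib

section
/- Let R_1,…,R_M ⊂ ℝ² be rectangles, each congruent to [0,α₁]×[0,α₂] with α₁ > α₂ > 0, such that for any two distinct rectangles the unoriented angle between their long sides is at least α₂/α₁. Then for every fixed i ∈ {1,…,M}, the sum over j of the areas of the intersections satisfies Σ_{j=1}^M 𝓛²(R_i ∩ R_j) ≤ 2√2·π·α₁·α₂·log(2π·α₁/α₂). -/
open MeasureTheory Filter Matrix Real Set

noncomputable section

abbrev E2 := EuclideanSpace ℝ (Fin 2)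

/-- unoriented angle between the lines spanned by two vectors -/
noncomputable def uangle (u v : E2) : ℝ :=
  Real.arccos (|(inner ℝ u v : ℝ)| / (‖u‖ * ‖v‖))

/-- the axis-parallel rectangle `[0, α₁] × [0, α₂]` in the plane -/
def baseRect (α₁ α₂ : ℝ) : Set E2 :=
  {x | x 0 ∈ Set.Icc 0 α₁ ∧ x 1 ∈ Set.Icc 0 α₂}

/-! ### Auxiliary lemmas -/

lemma harmonic_le (n : ℕ) : ∑ k ∈ Finset.range n, (1:ℝ)/(k+1) ≤ 1 + Real.log n := by
  induction n with
  | zero => simp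
  | succ m ih =>
    rcases Nat.eq_zero_or_pos m with hm | hm
    · subst hm; simp
    rw [Finset.sum_range_succ]
    have hlog : (1:ℝ)/(m+1) ≤ Real.log (m+1) - Real.log m := by
      have hm0 : (0:ℝ) < m := by exact_mod_cast hm
      have h1 : Real.log ((m:ℝ)/(m+1)) ≤ (m:ℝ)/(m+1) - 1 :=
        Real.log_le_sub_one_of_pos (by positivity)
      rw [Real.log_div (ne_of_gt hm0) (by positivity)] at h1
      have : (m:ℝ)/(m+1) - 1 = -(1/(m+1)) := by field_simp; ring
      rw [this] at h1
      linarith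
    have : Real.log m ≤ Real.log (m+1) := by
      apply Real.log_le_log (by exact_mod_cast hm); push_cast; linarith
    push_cast
    linarith

lemma sum_inv_le {ι : Type*} (δ : ℝ) (hδ : 0 < δ) (hδ2 : δ ≤ π/2) (s : Finset ι) (g : ι → ℝ)
    (h1 : ∀ j ∈ s, δ ≤ g j) (h2 : ∀ j ∈ s, g j ≤ π/2)
    (hsep : ∀ j ∈ s, ∀ k ∈ s, j ≠ k → δ ≤ |g j - g k|) :
    ∑ j ∈ s, 1 / g j ≤ (1 + Real.log (π/(2*δ))) / δ := by
  classical
  have hinj : Set.InjOn g s := by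
    intro j hj k hk hjk
    by_contra hne
    have := hsep j hj k hk hne
    rw [hjk] at this; simp at this; linarith
  set T := s.image g with hT
  have hcard : T.card = s.card := Finset.card_image_of_injOn hinj
  set n := T.card with hn
  have hsum : ∑ j ∈ s, 1 / g j = ∑ x ∈ T, 1 / x :=
    (Finset.sum_image (fun a ha b hb => hinj ha hb)).symm
  have hTlb : ∀ x ∈ T, δ ≤ x := by
    intro x hx; obtain ⟨j, hj, rfl⟩ := Finset.mem_image.1 hx; exact h1 j hj
  have hTub : ∀ x ∈ T, x ≤ π/2 := by
    intro x hx; obtain ⟨j, hj, rfl⟩ := Finset.mem_image.1 hx; exact h2 j hj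
  have hTsep : ∀ x ∈ T, ∀ y ∈ T, x ≠ y → δ ≤ |x - y| := by
    intro x hx y hy hxy
    obtain ⟨j, hj, rfl⟩ := Finset.mem_image.1 hx
    obtain ⟨k, hk, rfl⟩ := Finset.mem_image.1 hy
    exact hsep j hj k hk (fun h => hxy (by rw [h]))
  set e := T.orderIsoOfFin rfl with he
  have hlb : ∀ m : ℕ, ∀ hm : m < n, δ * (m + 1) ≤ (e ⟨m, hm⟩ : ℝ) := by
    intro m
    induction m with
    | zero => intro hm; simpa using hTlb _ (e ⟨0, hm⟩).2
    | succ k ih =>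
      intro hm
      have hk : k < n := Nat.lt_of_succ_lt hm
      have hlt : (e ⟨k, hk⟩ : ℝ) < e ⟨k+1, hm⟩ := by
        exact_mod_cast e.strictMono (show (⟨k, hk⟩ : Fin n) < ⟨k+1, hm⟩ by
          simp [Fin.lt_def])
      have hs := hTsep _ (e ⟨k+1, hm⟩).2 _ (e ⟨k, hk⟩).2 (by
        intro h
        have h2 : e ⟨k+1, hm⟩ = e ⟨k, hk⟩ := Subtype.ext h
        have := e.injective h2
        simp [Fin.ext_iff] at this)
      rw [abs_of_pos (by linarith)] at hs
      have := ih hk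
      push_cast
      push_cast at this
      linarith
  have hnbound : (n : ℝ) ≤ π / (2*δ) := by
    rcases Nat.eq_zero_or_pos n with h0 | h0
    · rw [h0]; push_cast; positivity
    · have hk : n - 1 < n := Nat.sub_lt h0 one_pos
      have h1' := hlb (n-1) hk
      have h2' := hTub _ (e ⟨n-1, hk⟩).2
      have hcast : ((n:ℝ) - 1) + 1 = (n:ℝ) := by ring
      have : ((n-1 : ℕ) : ℝ) = (n:ℝ) - 1 := by
        push_cast [Nat.cast_sub h0]; ring
      rw [this, hcast] at h1'
      rw [le_div_iff₀ (by positivity)]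
      nlinarith
  have hlogn : Real.log n ≤ Real.log (π/(2*δ)) := by
    rcases Nat.eq_zero_or_pos n with h0 | h0
    · rw [h0]
      simp only [Nat.cast_zero, Real.log_zero]
      apply Real.log_nonneg
      rw [le_div_iff₀ (by positivity)]; linarith
    · exact Real.log_le_log (by exact_mod_cast h0) hnbound
  have key : ∑ j ∈ s, 1 / g j ≤ (1/δ) * (1 + Real.log n) := by
    calc ∑ j ∈ s, 1 / g j = ∑ x ∈ T, 1/x := hsum
      _ = ∑ k : Fin n, 1 / (e k : ℝ) := by
          rw [← Finset.sum_attach T (fun x => 1/x)]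
          exact (Fintype.sum_equiv (e.toEquiv) _ _ (fun k => rfl)).symm
      _ ≤ ∑ k : Fin n, 1 / (δ * ((k:ℕ)+1)) := by
          apply Finset.sum_le_sum
          intro k _
          have := hlb k.1 k.2
          apply one_div_le_one_div_of_le (by positivity)
          simpa using this
      _ = (1/δ) * ∑ k ∈ Finset.range n, 1/((k:ℝ)+1) := by
          rw [Finset.mul_sum, ← Fin.sum_univ_eq_sum_range]
          congr 1; ext k; field_simp
      _ ≤ (1/δ) * (1 + Real.log n) :=
          mul_le_mul_of_nonneg_left (harmonic_le n) (by positivity)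
  have hfin : (1/δ) * (1 + Real.log n) ≤ (1 + Real.log (π/(2*δ))) / δ := by
    rw [div_eq_mul_one_div (1 + Real.log (π/(2*δ))) δ, mul_comm (1 + Real.log (π/(2*δ)))]
    apply mul_le_mul_of_nonneg_left (by linarith) (by positivity)
  linarith

lemma exists_angle (c s : ℝ) (h : c^2 + s^2 = 1) :
    ∃ ψ : ℝ, Real.cos ψ = c ∧ Real.sin ψ = s := by
  have hc1 : -1 ≤ c := by nlinarith
  have hc2 : c ≤ 1 := by nlinarith
  rcases le_or_gt 0 s with hs | hs
  · refine ⟨Real.arccos c, Real.cos_arccos hc1 hc2, ?_⟩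
    rw [Real.sin_arccos]
    rw [show 1 - c^2 = s^2 by linarith]
    rw [Real.sqrt_sq hs]
  · refine ⟨-Real.arccos c, by rw [Real.cos_neg]; exact Real.cos_arccos hc1 hc2, ?_⟩
    rw [Real.sin_neg, Real.sin_arccos]
    rw [show 1 - c^2 = s^2 by linarith]
    rw [Real.sqrt_sq_eq_abs, abs_of_neg hs]
    ring

lemma abs_neg_one_zpow' (k : ℤ) : |((-1:ℝ)) ^ k| = 1 := by
  rcases Int.even_or_odd k with hk | hk
  · rw [hk.neg_one_zpow]; norm_num
  · rw [hk.neg_one_zpow]; norm_num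

lemma abs_cos_reduce (x r : ℝ) (k : ℤ) (h : x = r + k * π) :
    |Real.cos x| = |Real.cos r| := by
  rw [h, Real.cos_add_int_mul_pi, abs_mul, abs_neg_one_zpow', one_mul]

lemma abs_sin_reduce (x r : ℝ) (k : ℤ) (h : x = r + k * π) :
    |Real.sin x| = |Real.sin r| := by
  rw [h, Real.sin_add_int_mul_pi, abs_mul, abs_neg_one_zpow', one_mul]

/-- reduction of x modulo π into [-π/2, π/2] -/
noncomputable def redmod (x : ℝ) : ℝ := x - round (x / π) * π

lemma redmod_spec (x : ℝ) : |redmod x| ≤ π/2 ∧ x = redmod x + round (x / π) * π := by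
  constructor
  · have h := abs_sub_round (x / π)
    have hπ : (0:ℝ) < π := Real.pi_pos
    have : redmod x = (x / π - round (x / π)) * π := by rw [redmod, sub_mul, div_mul_cancel₀ _ hπ.ne']
    rw [this, abs_mul, abs_of_pos hπ]
    calc |x / π - ↑(round (x / π))| * π ≤ (1/2) * π := by
          apply mul_le_mul_of_nonneg_right h hπ.le
      _ = π / 2 := by ring
  · simp [redmod]

lemma arccos_abs_cos_self (x : ℝ) (hx : |x| ≤ π/2) : Real.arccos |Real.cos x| = |x| := by
  have h3 : |Real.cos x| = Real.cos |x| := by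
    rw [Real.cos_abs]
    exact abs_of_nonneg (Real.cos_nonneg_of_mem_Icc
      ⟨by linarith [abs_nonneg x, neg_abs_le x], (abs_le.1 hx).2⟩)
  rw [h3, Real.arccos_cos (abs_nonneg _) (le_trans hx (by linarith [Real.pi_pos]))]

lemma arccos_abs_cos (x : ℝ) : Real.arccos |Real.cos x| = |redmod x| := by
  obtain ⟨h1, h2⟩ := redmod_spec x
  rw [abs_cos_reduce x (redmod x) (round (x/π)) h2]
  exact arccos_abs_cos_self _ h1

lemma perp_cases (a b x y : ℝ) (h1 : a^2+b^2=1) (h2 : x^2+y^2=1) (h3 : a*x + b*y = 0) :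
    (x = -b ∧ y = a) ∨ (x = b ∧ y = -a) := by
  have key : ((x+b)^2 + (y-a)^2) * ((x-b)^2 + (y+a)^2) = 0 := by
    nlinarith [sq_nonneg (x*b - y*a), sq_nonneg (x*b + y*a)]
  rcases mul_eq_zero.1 key with h | h
  · left
    constructor <;> nlinarith [sq_nonneg (x+b), sq_nonneg (y-a)]
  · right
    constructor <;> nlinarith [sq_nonneg (x-b), sq_nonneg (y+a)]

lemma perp_inner_sq (a b x y c d z w : ℝ)
    (h1 : a^2+b^2=1) (h2 : x^2+y^2=1) (h3 : a*x + b*y = 0)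
    (h4 : c^2+d^2=1) (h5 : z^2+w^2=1) (h6 : c*z + d*w = 0) :
    (x*z + y*w)^2 = (a*c + b*d)^2 := by
  rcases perp_cases a b x y h1 h2 h3 with ⟨rfl, rfl⟩ | ⟨rfl, rfl⟩ <;>
    rcases perp_cases c d z w h4 h5 h6 with ⟨rfl, rfl⟩ | ⟨rfl, rfl⟩ <;> ring

lemma inner_E2 (u v : E2) : (inner ℝ u v : ℝ) = u 0 * v 0 + u 1 * v 1 := by
  simp [PiLp.inner_apply, RCLike.inner_apply, Fin.sum_univ_two, mul_comm]

lemma norm_one_sq (u : E2) (h : ‖u‖ = 1) : u 0 ^ 2 + u 1 ^ 2 = 1 := by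
  have := real_inner_self_eq_norm_sq u
  rw [h, inner_E2] at this
  nlinarith [this]

lemma volume_box (a b c e : ℝ) :
    volume {x : E2 | x 0 ∈ Set.Icc a b ∧ x 1 ∈ Set.Icc c e} =
      ENNReal.ofReal (b - a) * ENNReal.ofReal (e - c) := by
  have h := PiLp.volume_preserving_ofLp (Fin 2)
  have hset : {x : E2 | x 0 ∈ Set.Icc a b ∧ x 1 ∈ Set.Icc c e} =
      (@WithLp.ofLp 2 (Fin 2 → ℝ)) ⁻¹'
        (Set.univ.pi fun i => if i = 0 then Set.Icc a b else Set.Icc c e) := by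
    ext x
    simp only [Set.mem_preimage, Set.mem_pi, Set.mem_univ, forall_true_left,
      Set.mem_setOf_eq]
    constructor
    · rintro ⟨h1, h2⟩ i
      fin_cases i <;> simp [h1, h2]
    · intro hi
      exact ⟨by simpa using hi 0, by simpa using hi 1⟩
  rw [hset, h.measure_preimage ((MeasurableSet.univ_pi fun i => by
    split <;> exact measurableSet_Icc).nullMeasurableSet)]
  rw [volume_pi_pi]
  rw [Fin.prod_univ_two]
  simp [Real.volume_Icc]

def stripMap (u v : E2) : E2 →ₗ[ℝ] E2 where
  toFun x := (WithLp.equiv 2 (Fin 2 → ℝ)).symm ![(inner ℝ u x : ℝ), (inner ℝ v x : ℝ)]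
  map_add' x y := by
    ext i
    fin_cases i <;> simp [inner_add_right]
  map_smul' c x := by
    ext i
    fin_cases i <;> simp [inner_smul_right]

lemma stripMap_apply (u v x : E2) (i : Fin 2) :
    stripMap u v x i = if i = 0 then (inner ℝ u x : ℝ) else (inner ℝ v x : ℝ) := by
  fin_cases i <;> rfl

lemma stripMap_det (u v : E2) :
    LinearMap.det (stripMap u v) = u 0 * v 1 - u 1 * v 0 := by
  rw [← LinearMap.det_toMatrix (EuclideanSpace.basisFun (Fin 2) ℝ).toBasis]
  rw [Matrix.det_fin_two]
  have h : ∀ i k : Fin 2, LinearMap.toMatrix (EuclideanSpace.basisFun (Fin 2) ℝ).toBasis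
      (EuclideanSpace.basisFun (Fin 2) ℝ).toBasis (stripMap u v) k i
      = stripMap u v (EuclideanSpace.single i 1) k := by
    intro i k
    rw [LinearMap.toMatrix_apply]
    rw [(EuclideanSpace.basisFun (Fin 2) ℝ).coe_toBasis_repr_apply]
    rw [(EuclideanSpace.basisFun (Fin 2) ℝ).coe_toBasis, EuclideanSpace.basisFun_apply]
    rfl
  rw [h, h, h, h]
  simp [stripMap_apply, EuclideanSpace.inner_single_right]

lemma volume_strip (u v : E2) (h : u 0 * v 1 - u 1 * v 0 ≠ 0) (a b c e : ℝ) :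
    volume {x : E2 | (inner ℝ u x : ℝ) ∈ Set.Icc a b ∧ (inner ℝ v x : ℝ) ∈ Set.Icc c e} =
      ENNReal.ofReal |(u 0 * v 1 - u 1 * v 0)⁻¹| *
        (ENNReal.ofReal (b - a) * ENNReal.ofReal (e - c)) := by
  have hdet : LinearMap.det (stripMap u v) ≠ 0 := by rw [stripMap_det]; exact h
  have hset : {x : E2 | (inner ℝ u x : ℝ) ∈ Set.Icc a b ∧ (inner ℝ v x : ℝ) ∈ Set.Icc c e} =
      (stripMap u v) ⁻¹' {y : E2 | y 0 ∈ Set.Icc a b ∧ y 1 ∈ Set.Icc c e} := by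
    ext x
    simp [Set.mem_preimage, stripMap_apply]
  rw [hset, MeasureTheory.Measure.addHaar_preimage_linearMap volume hdet, volume_box,
    stripMap_det]

lemma final_ineq (α₁ α₂ : ℝ) (hα₂ : 0 < α₂) (hα : α₂ < α₁) :
    α₁*α₂ + π*α₁*α₂*(1 + Real.log (π*α₁/(2*α₂))) ≤
      2*Real.sqrt 2*π*α₁*α₂*Real.log (2*π*α₁/α₂) := by
  have hα₁ : 0 < α₁ := hα₂.trans hα
  have hπ := Real.pi_gt_d2
  have hπ' := Real.pi_lt_d2
  have hs2 : Real.sqrt 2 ≥ 1.414 := by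
    nlinarith [Real.sq_sqrt (by norm_num : (0:ℝ) ≤ 2), Real.sqrt_nonneg 2]
  have hlog2 := Real.log_two_gt_d9
  have hu : 0 ≤ Real.log (π*α₁/(2*α₂)) := by
    apply Real.log_nonneg
    rw [le_div_iff₀ (by positivity)]
    nlinarith
  have hsplit : Real.log (2*π*α₁/α₂) = Real.log 4 + Real.log (π*α₁/(2*α₂)) := by
    rw [← Real.log_mul (by norm_num) (by positivity)]
    congr 1
    field_simp
    ring
  have hlog4 : Real.log 4 = 2 * Real.log 2 := by
    rw [show (4:ℝ) = 2^2 by norm_num, Real.log_pow]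
    push_cast; ring
  rw [hsplit, hlog4]
  set u := Real.log (π*α₁/(2*α₂)) with hudef
  have hA : 0 < α₁ * α₂ := by positivity
  have key : 1 + π*(1 + u) ≤ 2*Real.sqrt 2*π*(2*Real.log 2 + u) := by
    have p1 : Real.sqrt 2 * π ≥ 1.414*3.14 := by nlinarith
    have c1 : 2*(Real.sqrt 2*π)*(2*Real.log 2) ≥ 12 := by nlinarith
    have p2 : π ≤ 2*Real.sqrt 2*π := by nlinarith
    have c2 : π * u ≤ 2*Real.sqrt 2*π*u := mul_le_mul_of_nonneg_right p2 hu
    nlinarith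
  calc α₁*α₂ + π*α₁*α₂*(1 + u) = (α₁*α₂) * (1 + π*(1+u)) := by ring
    _ ≤ (α₁*α₂) * (2*Real.sqrt 2*π*(2*Real.log 2 + u)) := by
        apply mul_le_mul_of_nonneg_left key hA.le
    _ = 2*Real.sqrt 2*π*α₁*α₂*(2*Real.log 2 + u) := by ring

/-- If `R 1, …, R M` are rectangles of size `α₁ × α₂` (images of `[0,α₁] × [0,α₂]` under rigid
motions `x ↦ L i x + b i`), any two of which make an angle at least `α₂/α₁` between their long
sides, then for every fixed `i`,
`Σ_j 𝓛²(R i ∩ R j) ≤ 2 √2 π α₁ α₂ log(2π α₁/α₂)`. -/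
theorem sum_intersection_rectangles (M : ℕ) (α₁ α₂ : ℝ) (hα₂ : 0 < α₂) (hα : α₂ < α₁)
    (L : Fin M → (E2 ≃ₗᵢ[ℝ] E2)) (b : Fin M → E2) (R : Fin M → Set E2)
    (hR : ∀ i, R i = (fun x => L i x + b i) '' baseRect α₁ α₂)
    (hangle : ∀ i j, i ≠ j →
      α₂ / α₁ ≤ uangle (L i (EuclideanSpace.single 0 1)) (L j (EuclideanSpace.single 0 1))) :
    ∀ i, ∑ j : Fin M, volume (R i ∩ R j) ≤
      ENNReal.ofReal (2 * Real.sqrt 2 * π * α₁ * α₂ * Real.log (2 * π * α₁ / α₂)) := by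
  intro i
  classical
  have hα₁ : 0 < α₁ := hα₂.trans hα
  set δ := α₂ / α₁ with hδdef
  have hδ0 : 0 < δ := div_pos hα₂ hα₁
  have hδ1 : δ < 1 := (div_lt_one hα₁).2 hα
  have hπ2 : δ ≤ π / 2 := by have := Real.pi_gt_three; linarith
  set m : Fin M → E2 := fun j => L j (EuclideanSpace.single 0 1) with hmdef
  set n : Fin M → E2 := fun j => L j (EuclideanSpace.single 1 1) with hndef
  have hnormm : ∀ j, ‖m j‖ = 1 := by
    intro j; simp [hmdef, EuclideanSpace.norm_single]
  have hnormn : ∀ j, ‖n j‖ = 1 := by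
    intro j; simp [hndef, EuclideanSpace.norm_single]
  have hmsq : ∀ j, m j 0 ^2 + m j 1 ^2 = 1 := fun j => norm_one_sq _ (hnormm j)
  have hnsq : ∀ j, n j 0 ^2 + n j 1 ^2 = 1 := fun j => norm_one_sq _ (hnormn j)
  have hperp : ∀ j, m j 0 * n j 0 + m j 1 * n j 1 = 0 := by
    intro j
    have h0 : (inner ℝ (m j) (n j) : ℝ) = 0 := by
      simp only [hmdef, hndef]
      rw [LinearIsometryEquiv.inner_map_map, EuclideanSpace.inner_single_left]
      simp [EuclideanSpace.single_apply]
    rw [inner_E2] at h0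
    linarith
  choose ψ hψc hψs using fun j => exists_angle (n j 0) (n j 1) (hnsq j)
  have hinner_nn : ∀ j k, (inner ℝ (n j) (n k) : ℝ) = Real.cos (ψ j - ψ k) := by
    intro j k
    rw [inner_E2, Real.cos_sub, hψc, hψs, hψc, hψs]
  have huangle_eq : ∀ j k, uangle (n j) (n k) = Real.arccos |Real.cos (ψ j - ψ k)| := by
    intro j k
    unfold uangle
    rw [hnormn, hnormn, hinner_nn]
    norm_num
  have habs_eq : ∀ j k, |(inner ℝ (n j) (n k) : ℝ)| = |(inner ℝ (m j) (m k) : ℝ)| := by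
    intro j k
    rw [inner_E2, inner_E2]
    have hsq := perp_inner_sq (m j 0) (m j 1) (n j 0) (n j 1) (m k 0) (m k 1) (n k 0) (n k 1)
      (hmsq j) (hnsq j) (hperp j) (hmsq k) (hnsq k) (hperp k)
    calc |n j 0 * n k 0 + n j 1 * n k 1|
        = Real.sqrt ((n j 0 * n k 0 + n j 1 * n k 1)^2) := (Real.sqrt_sq_eq_abs _).symm
      _ = Real.sqrt ((m j 0 * m k 0 + m j 1 * m k 1)^2) := by rw [hsq]
      _ = _ := Real.sqrt_sq_eq_abs _
  have huangle_nm : ∀ j k, uangle (m j) (m k) = uangle (n j) (n k) := by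
    intro j k
    unfold uangle
    rw [hnormm, hnormm, hnormn, hnormn, habs_eq]
  have key2 : ∀ j k, j ≠ k → δ ≤ Real.arccos |Real.cos (ψ j - ψ k)| := by
    intro j k hjk
    rw [← huangle_eq, ← huangle_nm]
    exact hangle j k hjk
  set r : Fin M → ℝ := fun j => redmod (ψ j - ψ i) with hrdef
  set θ : Fin M → ℝ := fun j => |r j| with hθdef
  have hθnonneg : ∀ j, 0 ≤ θ j := by
    intro j; simp only [hθdef]; exact abs_nonneg _
  have hθle : ∀ j, θ j ≤ π/2 := by
    intro j; simp only [hθdef, hrdef]; exact (redmod_spec _).1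
  have hθδ : ∀ j, j ≠ i → δ ≤ θ j := by
    intro j hj
    have h := key2 j i hj
    rw [arccos_abs_cos] at h
    simpa only [hθdef, hrdef] using h
  have hsep : ∀ j k, j ≠ k → |r j - r k| ≤ π/2 → δ ≤ |r j - r k| := by
    intro j k hjk hle
    have h2 := key2 j k hjk
    have hx : ψ j - ψ k = (r j - r k) +
        ((round ((ψ j - ψ i)/π) - round ((ψ k - ψ i)/π) : ℤ) : ℝ) * π := by
      have e1 := (redmod_spec (ψ j - ψ i)).2
      have e2 := (redmod_spec (ψ k - ψ i)).2
      simp only [hrdef]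
      push_cast
      linarith
    rw [abs_cos_reduce _ _ _ hx, arccos_abs_cos_self _ hle] at h2
    exact h2
  -- strip subsets
  set cc : Fin M → ℝ := fun k => (inner ℝ (n k) (b k) : ℝ) with hccdef
  set dd : ℝ := (inner ℝ (m i) (b i) : ℝ) with hdddef
  have hsubshort : ∀ k, R k ⊆
      {x : E2 | (inner ℝ (n k) x : ℝ) ∈ Set.Icc (cc k) (cc k + α₂)} := by
    intro k x hx
    rw [hR k] at hx
    obtain ⟨y, hy, rfl⟩ := hx
    have hval : (inner ℝ (n k) (L k y + b k) : ℝ) = y 1 + cc k := by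
      rw [inner_add_right]
      simp only [hndef, hccdef]
      rw [LinearIsometryEquiv.inner_map_map, EuclideanSpace.inner_single_left]
      simp
    rw [Set.mem_setOf_eq, hval]
    obtain ⟨hy0, hy1⟩ := hy
    exact ⟨by linarith [hy1.1], by linarith [hy1.2]⟩
  have hsublong : R i ⊆
      {x : E2 | (inner ℝ (m i) x : ℝ) ∈ Set.Icc dd (dd + α₁)} := by
    intro x hx
    rw [hR i] at hx
    obtain ⟨y, hy, rfl⟩ := hx
    have hval : (inner ℝ (m i) (L i y + b i) : ℝ) = y 0 + dd := by
      rw [inner_add_right]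
      simp only [hmdef, hdddef]
      rw [LinearIsometryEquiv.inner_map_map, EuclideanSpace.inner_single_left]
      simp
    rw [Set.mem_setOf_eq, hval]
    obtain ⟨hy0, hy1⟩ := hy
    exact ⟨by linarith [hy0.1], by linarith [hy0.2]⟩
  -- volume of the diagonal term
  have hvol_ii : volume (R i ∩ R i) ≤ ENNReal.ofReal (α₁*α₂) := by
    have hdet2 : (m i 0 * n i 1 - m i 1 * n i 0)^2 = 1 := by
      have : (m i 0 * n i 1 - m i 1 * n i 0)^2 =
          (m i 0^2 + m i 1^2)*(n i 0^2 + n i 1^2)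
            - (m i 0 * n i 0 + m i 1 * n i 1)^2 := by ring
      rw [this, hmsq i, hnsq i, hperp i]
      norm_num
    have hdet0 : m i 0 * n i 1 - m i 1 * n i 0 ≠ 0 := by
      intro h; rw [h] at hdet2; norm_num at hdet2
    have habs1 : |(m i 0 * n i 1 - m i 1 * n i 0)⁻¹| = 1 := by
      rw [abs_inv]
      rw [show |m i 0 * n i 1 - m i 1 * n i 0| =
        Real.sqrt ((m i 0 * n i 1 - m i 1 * n i 0)^2) from (Real.sqrt_sq_eq_abs _).symm]
      rw [hdet2]
      simp
    calc volume (R i ∩ R i)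
        ≤ volume {x : E2 | (inner ℝ (m i) x : ℝ) ∈ Set.Icc dd (dd + α₁) ∧
            (inner ℝ (n i) x : ℝ) ∈ Set.Icc (cc i) (cc i + α₂)} :=
          measure_mono (fun x hx => ⟨hsublong hx.1, hsubshort i hx.2⟩)
      _ = ENNReal.ofReal |(m i 0 * n i 1 - m i 1 * n i 0)⁻¹| *
            (ENNReal.ofReal (dd + α₁ - dd) * ENNReal.ofReal (cc i + α₂ - cc i)) :=
          volume_strip _ _ hdet0 _ _ _ _
      _ = ENNReal.ofReal (α₁*α₂) := by
          rw [habs1, add_sub_cancel_left, add_sub_cancel_left]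
          simp [← ENNReal.ofReal_mul hα₁.le]
  -- volume of the off-diagonal terms
  have hdetj : ∀ j, n i 0 * n j 1 - n i 1 * n j 0 = Real.sin (ψ j - ψ i) := by
    intro j
    rw [Real.sin_sub, hψc, hψs, hψc, hψs]
    ring
  have habs_det : ∀ j, |Real.sin (ψ j - ψ i)| = Real.sin (θ j) := by
    intro j
    have h1 := (redmod_spec (ψ j - ψ i)).1
    rw [abs_sin_reduce _ _ _ (redmod_spec (ψ j - ψ i)).2]
    have hb := abs_le.1 h1
    have hπ := Real.pi_pos
    simp only [hθdef, hrdef]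
    rcases le_or_gt 0 (redmod (ψ j - ψ i)) with h | h
    · rw [abs_of_nonneg h,
        abs_of_nonneg (Real.sin_nonneg_of_nonneg_of_le_pi h (by
          rw [abs_of_nonneg h] at h1; linarith))]
    · rw [abs_of_neg h, Real.sin_neg,
        abs_of_neg (Real.sin_neg_of_neg_of_neg_pi_lt h (by
          rw [abs_of_neg h] at h1; linarith))]
  have hsinpos : ∀ j, j ≠ i → 0 < Real.sin (θ j) := by
    intro j hj
    exact Real.sin_pos_of_pos_of_lt_pi (lt_of_lt_of_le hδ0 (hθδ j hj))
      (lt_of_le_of_lt (hθle j) (by linarith [Real.pi_pos]))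
  have hvol_ne : ∀ j, j ≠ i →
      volume (R i ∩ R j) ≤ ENNReal.ofReal (α₂^2 * (π/2) / θ j) := by
    intro j hj
    have hdet0 : n i 0 * n j 1 - n i 1 * n j 0 ≠ 0 := by
      rw [hdetj j]
      intro h
      have h2 := habs_det j
      rw [h] at h2
      simp at h2
      linarith [hsinpos j hj]
    have hθpos : 0 < θ j := lt_of_lt_of_le hδ0 (hθδ j hj)
    calc volume (R i ∩ R j)
        ≤ volume {x : E2 | (inner ℝ (n i) x : ℝ) ∈ Set.Icc (cc i) (cc i + α₂) ∧
            (inner ℝ (n j) x : ℝ) ∈ Set.Icc (cc j) (cc j + α₂)} :=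
          measure_mono (fun x hx => ⟨hsubshort i hx.1, hsubshort j hx.2⟩)
      _ = ENNReal.ofReal |(n i 0 * n j 1 - n i 1 * n j 0)⁻¹| *
            (ENNReal.ofReal (cc i + α₂ - cc i) * ENNReal.ofReal (cc j + α₂ - cc j)) :=
          volume_strip _ _ hdet0 _ _ _ _
      _ ≤ ENNReal.ofReal (α₂^2 * (π/2) / θ j) := by
          rw [abs_inv, hdetj j, habs_det j, add_sub_cancel_left, add_sub_cancel_left]
          rw [← ENNReal.ofReal_mul hα₂.le, ← ENNReal.ofReal_mul (inv_nonneg.2 (hsinpos j hj).le)]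
          apply ENNReal.ofReal_le_ofReal
          have hsin := Real.mul_le_sin (le_of_lt hθpos) (hθle j)
          have e1 : (Real.sin (θ j))⁻¹ ≤ (2/π*θ j)⁻¹ :=
            inv_anti₀ (mul_pos (by positivity) hθpos) hsin
          have e2 : (2/π*(θ j))⁻¹ = (π/2) * (θ j)⁻¹ := by
            field_simp
          calc (Real.sin (θ j))⁻¹ * (α₂ * α₂)
              ≤ ((π/2) * (θ j)⁻¹) * (α₂ * α₂) :=
                mul_le_mul_of_nonneg_right (e1.trans_eq e2) (by positivity)
            _ = α₂^2 * (π/2) / θ j := by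
                field_simp
  -- sum over the off-diagonal terms
  set s : Finset (Fin M) := Finset.univ.erase i with hsdef
  have hbound : ∑ j ∈ s, volume (R i ∩ R j) ≤
      ENNReal.ofReal (∑ j ∈ s, α₂^2*(π/2)/θ j) := by
    rw [ENNReal.ofReal_sum_of_nonneg (fun j hj =>
      div_nonneg (by positivity) (hθnonneg j))]
    apply Finset.sum_le_sum
    intro j hj
    exact hvol_ne j (Finset.ne_of_mem_erase hj)
  have hreal : ∑ j ∈ s, α₂^2*(π/2)/θ j ≤ π*α₁*α₂*(1 + Real.log (π*α₁/(2*α₂))) := by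
    have hsplit2 : ∑ j ∈ s, α₂^2*(π/2)/θ j = α₂^2*(π/2) * ∑ j ∈ s, 1/θ j := by
      rw [Finset.mul_sum]
      apply Finset.sum_congr rfl
      intro j _
      rw [mul_one_div]
    rw [hsplit2]
    set sP := s.filter (fun j => 0 ≤ r j) with hsp
    set sN := s.filter (fun j => ¬ 0 ≤ r j) with hsm
    have hsum_split : ∑ j ∈ s, 1/θ j = ∑ j ∈ sP, 1/θ j + ∑ j ∈ sN, 1/θ j :=
      (Finset.sum_filter_add_sum_filter_not s _ _).symm
    have hbnd : ∀ (t : Finset (Fin M)), (∀ j ∈ t, j ≠ i) →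
        (∀ j ∈ t, ∀ k ∈ t, j ≠ k → δ ≤ |θ j - θ k|) →
        ∑ j ∈ t, 1/θ j ≤ (1 + Real.log (π/(2*δ)))/δ := by
      intro t hti htsep
      exact sum_inv_le δ hδ0 hπ2 t θ (fun j hj => hθδ j (hti j hj))
        (fun j hj => hθle j) htsep
    have hrb : ∀ j, |r j| ≤ π/2 := by
      intro j; simp only [hrdef]; exact (redmod_spec _).1
    have hP2 : ∑ j ∈ sP, 1/θ j ≤ (1 + Real.log (π/(2*δ)))/δ := by
      apply hbnd
      · intro j hj
        exact Finset.ne_of_mem_erase (Finset.mem_of_mem_filter j hj)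
      · intro j hj k hk hjk
        have hrj : 0 ≤ r j := (Finset.mem_filter.1 hj).2
        have hrk : 0 ≤ r k := (Finset.mem_filter.1 hk).2
        have heq : |θ j - θ k| = |r j - r k| := by
          simp only [hθdef, abs_of_nonneg hrj, abs_of_nonneg hrk]
        rw [heq]
        apply hsep j k hjk
        have hbj := hrb j; have hbk := hrb k
        rw [abs_of_nonneg hrj] at hbj
        rw [abs_of_nonneg hrk] at hbk
        rw [abs_le]
        constructor <;> linarith
    have hN2 : ∑ j ∈ sN, 1/θ j ≤ (1 + Real.log (π/(2*δ)))/δ := by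
      apply hbnd
      · intro j hj
        exact Finset.ne_of_mem_erase (Finset.mem_of_mem_filter j hj)
      · intro j hj k hk hjk
        have hrj : r j < 0 := lt_of_not_ge (Finset.mem_filter.1 hj).2
        have hrk : r k < 0 := lt_of_not_ge (Finset.mem_filter.1 hk).2
        have heq : |θ j - θ k| = |r j - r k| := by
          simp only [hθdef, abs_of_neg hrj, abs_of_neg hrk]
          rw [show -r j - -r k = -(r j - r k) by ring, abs_neg]
        rw [heq]
        apply hsep j k hjk
        have hbj := hrb j; have hbk := hrb k
        rw [abs_of_neg hrj] at hbj
        rw [abs_of_neg hrk] at hbk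
        rw [abs_le]
        constructor <;> linarith
    have harg : π/(2*δ) = π*α₁/(2*α₂) := by
      rw [hδdef]; field_simp
    have hSig : ∑ j ∈ s, 1/θ j ≤ 2 * (1 + Real.log (π*α₁/(2*α₂)))/δ := by
      rw [hsum_split, ← harg]
      have : 2 * (1 + Real.log (π/(2*δ)))/δ
          = (1 + Real.log (π/(2*δ)))/δ + (1 + Real.log (π/(2*δ)))/δ := by ring
      rw [this]
      exact add_le_add hP2 hN2
    calc α₂^2*(π/2) * ∑ j ∈ s, 1/θ j
        ≤ α₂^2*(π/2) * (2 * (1 + Real.log (π*α₁/(2*α₂)))/δ) :=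
          mul_le_mul_of_nonneg_left hSig (by positivity)
      _ = π*α₁*α₂*(1 + Real.log (π*α₁/(2*α₂))) := by
          rw [hδdef]
          field_simp
  -- putting everything together
  have hsplit3 : ∑ j : Fin M, volume (R i ∩ R j) =
      volume (R i ∩ R i) + ∑ j ∈ s, volume (R i ∩ R j) :=
    (Finset.add_sum_erase Finset.univ _ (Finset.mem_univ i)).symm
  have hu0 : 0 ≤ Real.log (π*α₁/(2*α₂)) := by
    apply Real.log_nonneg
    rw [le_div_iff₀ (by positivity)]
    nlinarith [Real.pi_gt_three]
  calc ∑ j : Fin M, volume (R i ∩ R j)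
      = volume (R i ∩ R i) + ∑ j ∈ s, volume (R i ∩ R j) := hsplit3
    _ ≤ ENNReal.ofReal (α₁*α₂) + ENNReal.ofReal (π*α₁*α₂*(1 + Real.log (π*α₁/(2*α₂)))) :=
        add_le_add hvol_ii (hbound.trans (ENNReal.ofReal_le_ofReal hreal))
    _ = ENNReal.ofReal (α₁*α₂ + π*α₁*α₂*(1 + Real.log (π*α₁/(2*α₂)))) :=
        (ENNReal.ofReal_add (by positivity)
          (mul_nonneg (by positivity) (by linarith))).symm
    _ ≤ ENNReal.ofReal (2 * Real.sqrt 2 * π * α₁ * α₂ * Real.log (2 * π * α₁ / α₂)) :=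
        ENNReal.ofReal_le_ofReal (final_ineq α₁ α₂ hα₂ hα)

end
end

section
/- Let a, b, c, d > 0 be real numbers and define g : ℝ → ℝ by g(s) = log((c + d·e^s)/(a + b·e^s)). Then for every s ∈ ℝ, |g'(s)| = |ad − bc|·e^s/((a + b·e^s)(c + d·e^s)), this quantity attains its maximum at s₀ = (1/2)·log(ac/(bd)), and the maximum value equals |ad − bc|/(ad + bc + 2·√(abcd)), which is strictly less than 1. -/
open Real

/-- The derivative of `g(s) = log((c + d eˢ)/(a + b eˢ))` equals
`(ad − bc) eˢ / ((a + b eˢ)(c + d eˢ))` in absolute value, is maximized at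
`s₀ = ½ log(ac/(bd))`, and the maximum value `|ad − bc|/(ad + bc + 2√(abcd))` is
strictly less than `1`. -/
theorem deriv_log_mobius_exp (a b c d : ℝ) (ha : 0 < a) (hb : 0 < b) (hc : 0 < c)
    (hd : 0 < d) :
    (∀ s : ℝ,
      |deriv (fun s : ℝ => Real.log ((c + d * Real.exp s) / (a + b * Real.exp s))) s| =
        |a * d - b * c| * Real.exp s / ((a + b * Real.exp s) * (c + d * Real.exp s))) ∧
    (∀ s : ℝ,
      |deriv (fun s : ℝ => Real.log ((c + d * Real.exp s) / (a + b * Real.exp s))) s| ≤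
        |deriv (fun s : ℝ => Real.log ((c + d * Real.exp s) / (a + b * Real.exp s)))
          ((1 / 2) * Real.log (a * c / (b * d)))|) ∧
    |deriv (fun s : ℝ => Real.log ((c + d * Real.exp s) / (a + b * Real.exp s)))
        ((1 / 2) * Real.log (a * c / (b * d)))| =
      |a * d - b * c| / (a * d + b * c + 2 * Real.sqrt (a * b * c * d)) ∧
    |a * d - b * c| / (a * d + b * c + 2 * Real.sqrt (a * b * c * d)) < 1 := by
  have hpa : ∀ s : ℝ, 0 < a + b * Real.exp s := fun s => by positivity
  have hpc : ∀ s : ℝ, 0 < c + d * Real.exp s := fun s => by positivity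
  -- derivative formula
  have hderiv : ∀ s : ℝ,
      deriv (fun s : ℝ => Real.log ((c + d * Real.exp s) / (a + b * Real.exp s))) s
        = (a * d - b * c) * Real.exp s / ((a + b * Real.exp s) * (c + d * Real.exp s)) := by
    intro s
    have h1 : HasDerivAt (fun s : ℝ => c + d * Real.exp s) (d * Real.exp s) s := by
      simpa using ((Real.hasDerivAt_exp s).const_mul d).const_add c
    have h2 : HasDerivAt (fun s : ℝ => a + b * Real.exp s) (b * Real.exp s) s := by
      simpa using ((Real.hasDerivAt_exp s).const_mul b).const_add a
    have h3 := h1.log (hpc s).ne'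
    have h4 := h2.log (hpa s).ne'
    have h5 : (fun s : ℝ => Real.log ((c + d * Real.exp s) / (a + b * Real.exp s))) =
        fun s : ℝ => Real.log (c + d * Real.exp s) - Real.log (a + b * Real.exp s) := by
      funext t
      rw [Real.log_div (hpc t).ne' (hpa t).ne']
    have h6 : HasDerivAt (fun s : ℝ => Real.log (c + d * Real.exp s) - Real.log (a + b * Real.exp s))
        (d * Real.exp s / (c + d * Real.exp s) - b * Real.exp s / (a + b * Real.exp s)) s := h3.sub h4
    rw [h5, h6.deriv]
    field_simp
    ring
  have habs : ∀ s : ℝ,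
      |deriv (fun s : ℝ => Real.log ((c + d * Real.exp s) / (a + b * Real.exp s))) s| =
        |a * d - b * c| * Real.exp s / ((a + b * Real.exp s) * (c + d * Real.exp s)) := by
    intro s
    rw [hderiv s, abs_div, abs_mul, abs_of_pos (Real.exp_pos s),
      abs_of_pos (mul_pos (hpa s) (hpc s))]
  -- properties of the critical point
  set s₀ : ℝ := (1 / 2) * Real.log (a * c / (b * d)) with hs₀
  have hxpos : (0:ℝ) < a * c / (b * d) := by positivity
  have hexp0 : Real.exp s₀ = Real.sqrt (a * c / (b * d)) := by
    rw [hs₀, Real.sqrt_eq_rpow, Real.rpow_def_of_pos hxpos]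
    ring_nf
  set t₀ : ℝ := Real.sqrt (a * c / (b * d)) with ht₀
  have ht₀pos : 0 < t₀ := Real.sqrt_pos.2 hxpos
  have hsq : b * d * t₀ ^ 2 = a * c := by
    rw [ht₀, Real.sq_sqrt hxpos.le]
    field_simp
  have hkey : t₀ * Real.sqrt (a * b * c * d) = a * c := by
    rw [ht₀, ← Real.sqrt_mul hxpos.le]
    have : a * c / (b * d) * (a * b * c * d) = (a * c) ^ 2 := by
      field_simp
    rw [this, Real.sqrt_sq (by positivity)]
  have hS : 0 < Real.sqrt (a * b * c * d) := Real.sqrt_pos.2 (by positivity)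
  refine ⟨habs, ?_, ?_, ?_⟩
  · intro s
    rw [habs s, habs s₀, hexp0]
    set t := Real.exp s with ht
    have htpos : 0 < t := Real.exp_pos s
    rw [div_le_div_iff₀ (by positivity) (by positivity)]
    have hpoly : t * ((a + b * t₀) * (c + d * t₀)) + b * d * t₀ * (t₀ - t) ^ 2 =
        t₀ * ((a + b * t) * (c + d * t)) := by
      linear_combination (t₀ - t) * hsq
    have hle : t * ((a + b * t₀) * (c + d * t₀)) ≤ t₀ * ((a + b * t) * (c + d * t)) := by
      nlinarith [mul_nonneg (mul_nonneg (mul_pos hb hd).le ht₀pos.le) (sq_nonneg (t₀ - t))]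
    nlinarith [mul_le_mul_of_nonneg_left hle (abs_nonneg (a * d - b * c))]
  · rw [habs s₀, hexp0]
    rw [div_eq_div_iff (by positivity) (by positivity)]
    linear_combination |a * d - b * c| * 2 * hkey - |a * d - b * c| * hsq
  · rw [div_lt_one (by positivity)]
    rcases abs_cases (a * d - b * c) with ⟨h, _⟩ | ⟨h, _⟩ <;> nlinarith
end

section
/- Let I = {1,…,κ} with κ ≥ 2, and for each i ∈ I let A_i ∈ ℝ^{2×2} be invertible with ‖A_i‖ ≤ ᾱ < 1 and let a_i ∈ ℝ². Let E be the attractor of the affine IFS Φ = {f_i(x) = A_i x + a_i}, and set x_i = a_i + Σ_{n≥0} A_i A₁ⁿ a₁ and y_i = a_i + Σ_{n≥0} A_i A_κⁿ a_κ for i ∈ I (the fixed-point images π(i1^∞), π(iκ^∞)). Define M ∈ ℝ^{κ×κ} by M_{ij} = 1 if the open segments (x_i, y_i) and (x_j, y_j) intersect in exactly one point, and M_{ij} = 0 otherwise. If M is irreducible (for all i, j there exists n > 0 with (M^n)_{ij} > 0), then there exist ε > 0 and ϱ > 0 such that for every affine IFS Φ' = {x ↦ A_i' x + a_i'} with each A_i'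 an invertible contraction and all entries of A_i − A_i' and a_i − a_i' of absolute value less than ε, the attractor E' of Φ' satisfies: for every unit vector e ∈ ℝ², {x·e : x ∈ E'} is an interval of length at least ϱ. -/
open Set Matrix RealInnerProductSpace

noncomputable section

noncomputable def mLin (A : Matrix (Fin 2) (Fin 2) ℝ) : E2 →L[ℝ] E2 :=
  LinearMap.toContinuousLinearMap (Matrix.toEuclideanLin A)

/-- largest singular value = operator norm -/
noncomputable def a1 (A : Matrix (Fin 2) (Fin 2) ℝ) : ℝ := ‖mLin A‖

lemma tEL_coord (A : Matrix (Fin 2) (Fin 2) ℝ) (v : E2) (r : Fin 2) :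
    (Matrix.toEuclideanLin A v) r = ∑ s, A r s * v s := by
  simp [Matrix.toEuclideanLin_apply, Matrix.mulVec, dotProduct]
  fin_cases r <;> rfl

lemma E2_norm_sq (v : E2) : ‖v‖^2 = (v 0)^2 + (v 1)^2 := by
  have := PiLp.norm_sq_eq_of_L2 (fun _ : Fin 2 => ℝ) v
  simpa [Fin.sum_univ_two, Real.norm_eq_abs, sq_abs] using this

lemma E2_norm_le (v : E2) : ‖v‖ ≤ |v 0| + |v 1| := by
  nlinarith [E2_norm_sq v, norm_nonneg v, abs_nonneg (v 0), abs_nonneg (v 1),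
    sq_abs (v 0), sq_abs (v 1), abs_mul_abs_self (v 0), abs_mul_abs_self (v 1)]

lemma E2_coord_le (v : E2) (r : Fin 2) : |v r| ≤ ‖v‖ := by
  rcases r with ⟨r, hr⟩
  interval_cases r
  · show |v 0| ≤ ‖v‖
    nlinarith [E2_norm_sq v, norm_nonneg v, abs_nonneg (v 0), abs_nonneg (v 1),
      sq_abs (v 0), sq_abs (v 1)]
  · show |v 1| ≤ ‖v‖
    nlinarith [E2_norm_sq v, norm_nonneg v, abs_nonneg (v 0), abs_nonneg (v 1),
      sq_abs (v 0), sq_abs (v 1)]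

lemma E2_inner (x e : E2) : ⟪x, e⟫ = x 0 * e 0 + x 1 * e 1 := by
  simp [PiLp.inner_apply, Fin.sum_univ_two]
  ring

-- transpose identity
lemma inner_tEL (B : Matrix (Fin 2) (Fin 2) ℝ) (v e : E2) :
    ⟪Matrix.toEuclideanLin B v, e⟫ = ⟪v, Matrix.toEuclideanLin Bᵀ e⟫ := by
  simp [E2_inner, tEL_coord, Fin.sum_univ_two, Matrix.transpose_apply]
  ring

-- pointwise norm bound from entries
lemma tEL_norm_le (B : Matrix (Fin 2) (Fin 2) ℝ) (c : ℝ) (hc : ∀ r s, |B r s| ≤ c) (v : E2) :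
    ‖Matrix.toEuclideanLin B v‖ ≤ 4 * c * ‖v‖ := by
  have h0 : |(Matrix.toEuclideanLin B v) 0| ≤ c * ‖v‖ + c * ‖v‖ := by
    rw [tEL_coord, Fin.sum_univ_two]
    refine (abs_add_le _ _).trans ?_
    gcongr <;> rw [abs_mul] <;> exact mul_le_mul (hc _ _) (E2_coord_le v _) (abs_nonneg _)
      ((abs_nonneg _).trans (hc 0 0))
  have h1 : |(Matrix.toEuclideanLin B v) 1| ≤ c * ‖v‖ + c * ‖v‖ := by
    rw [tEL_coord, Fin.sum_univ_two]
    refine (abs_add_le _ _).trans ?_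
    gcongr <;> rw [abs_mul] <;> exact mul_le_mul (hc _ _) (E2_coord_le v _) (abs_nonneg _)
      ((abs_nonneg _).trans (hc 0 0))
  calc ‖Matrix.toEuclideanLin B v‖ ≤ _ + _ := E2_norm_le _
  _ ≤ (c * ‖v‖ + c * ‖v‖) + (c * ‖v‖ + c * ‖v‖) := add_le_add h0 h1
  _ = 4 * c * ‖v‖ := by ring

-- transpose norm bound
lemma tEL_transpose_norm_le (B : Matrix (Fin 2) (Fin 2) ℝ) (β : ℝ) (hβ : ‖mLin B‖ ≤ β) (e : E2) :
    ‖Matrix.toEuclideanLin Bᵀ e‖ ≤ β * ‖e‖ := by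
  have h := inner_tEL B (Matrix.toEuclideanLin Bᵀ e) e
  have hb : 0 ≤ β := le_trans (norm_nonneg _) hβ
  by_cases hz : ‖Matrix.toEuclideanLin Bᵀ e‖ = 0
  · rw [hz]; positivity
  have : ‖Matrix.toEuclideanLin Bᵀ e‖^2 = ⟪Matrix.toEuclideanLin Bᵀ e, Matrix.toEuclideanLin Bᵀ e⟫ := (real_inner_self_eq_norm_sq _).symm
  rw [← h] at this
  have hle : ⟪Matrix.toEuclideanLin B (Matrix.toEuclideanLin Bᵀ e), e⟫ ≤ ‖Matrix.toEuclideanLin B (Matrix.toEuclideanLin Bᵀ e)‖ * ‖e‖ :=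
    real_inner_le_norm _ _
  have hB : ‖Matrix.toEuclideanLin B (Matrix.toEuclideanLin Bᵀ e)‖ ≤ β * ‖Matrix.toEuclideanLin Bᵀ e‖ := by
    have := (mLin B).le_opNorm (Matrix.toEuclideanLin Bᵀ e)
    calc ‖Matrix.toEuclideanLin B (Matrix.toEuclideanLin Bᵀ e)‖ = ‖mLin B (Matrix.toEuclideanLin Bᵀ e)‖ := rfl
    _ ≤ ‖mLin B‖ * ‖Matrix.toEuclideanLin Bᵀ e‖ := this
    _ ≤ β * ‖Matrix.toEuclideanLin Bᵀ e‖ := by gcongr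
  have hpos : 0 < ‖Matrix.toEuclideanLin Bᵀ e‖ := lt_of_le_of_ne (norm_nonneg _) (Ne.symm hz)
  have key : ‖Matrix.toEuclideanLin Bᵀ e‖ * ‖Matrix.toEuclideanLin Bᵀ e‖ ≤ (β * ‖e‖) * ‖Matrix.toEuclideanLin Bᵀ e‖ := by
    nlinarith [norm_nonneg e]
  exact le_of_mul_le_mul_right key hpos

lemma tEL_mul (B C : Matrix (Fin 2) (Fin 2) ℝ) (v : E2) :
    Matrix.toEuclideanLin (B * C) v = Matrix.toEuclideanLin B (Matrix.toEuclideanLin C v) := by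
  simp [Matrix.toEuclideanLin_apply, Matrix.mulVec_mulVec]

lemma tEL_one (v : E2) : Matrix.toEuclideanLin (1 : Matrix (Fin 2) (Fin 2) ℝ) v = v := by
  simp [Matrix.toEuclideanLin_apply]

lemma tEL_pow_norm_le (B : Matrix (Fin 2) (Fin 2) ℝ) (β : ℝ) (hβ : ‖mLin B‖ ≤ β) (c : E2) (n : ℕ) :
    ‖Matrix.toEuclideanLin (B ^ n) c‖ ≤ β ^ n * ‖c‖ := by
  induction n with
  | zero => simp [tEL_one]
  | succ n ih =>
    rw [pow_succ']  -- B^(n+1) = B * B^n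
    rw [tEL_mul]
    calc ‖Matrix.toEuclideanLin B (Matrix.toEuclideanLin (B ^ n) c)‖
        = ‖mLin B (Matrix.toEuclideanLin (B ^ n) c)‖ := rfl
      _ ≤ ‖mLin B‖ * ‖Matrix.toEuclideanLin (B ^ n) c‖ := (mLin B).le_opNorm _
      _ ≤ β * (β ^ n * ‖c‖) := by
          apply mul_le_mul hβ ih (norm_nonneg _) (le_trans (norm_nonneg _) hβ)
      _ = β ^ (n+1) * ‖c‖ := by ring

lemma tEL_summable (B : Matrix (Fin 2) (Fin 2) ℝ) (β : ℝ) (hβ : ‖mLin B‖ ≤ β) (hβ1 : β < 1) (c : E2) :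
    Summable (fun n : ℕ => Matrix.toEuclideanLin (B ^ n) c) := by
  have hb0 : 0 ≤ β := le_trans (norm_nonneg _) hβ
  apply Summable.of_norm_bounded (g := fun n => β ^ n * ‖c‖)
  · exact (summable_geometric_of_lt_one hb0 hβ1).mul_right _
  · exact tEL_pow_norm_le B β hβ c

lemma tEL_fixed (B : Matrix (Fin 2) (Fin 2) ℝ) (β : ℝ) (hβ : ‖mLin B‖ ≤ β) (hβ1 : β < 1) (c : E2) :
    Matrix.toEuclideanLin B (∑' n : ℕ, Matrix.toEuclideanLin (B ^ n) c) + c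
      = ∑' n : ℕ, Matrix.toEuclideanLin (B ^ n) c := by
  have hs := tEL_summable B β hβ hβ1 c
  have h1 : Matrix.toEuclideanLin B (∑' n : ℕ, Matrix.toEuclideanLin (B ^ n) c)
      = ∑' n : ℕ, Matrix.toEuclideanLin (B ^ (n+1)) c := by
    calc Matrix.toEuclideanLin B (∑' n : ℕ, Matrix.toEuclideanLin (B ^ n) c)
        = mLin B (∑' n : ℕ, Matrix.toEuclideanLin (B ^ n) c) := rfl
      _ = ∑' n : ℕ, mLin B (Matrix.toEuclideanLin (B ^ n) c) := (mLin B).map_tsum hs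
      _ = ∑' n : ℕ, Matrix.toEuclideanLin (B ^ (n+1)) c := by
          congr 1; funext n; rw [pow_succ', tEL_mul]; rfl
  rw [h1]
  have h2 := (Summable.tsum_eq_zero_add hs).symm
  rw [pow_zero, tEL_one] at h2
  rw [← h2, add_comm]

lemma tEL_tsum_mul (Ai B : Matrix (Fin 2) (Fin 2) ℝ) (β : ℝ) (hβ : ‖mLin B‖ ≤ β) (hβ1 : β < 1) (c : E2) :
    (∑' n : ℕ, Matrix.toEuclideanLin (Ai * B ^ n) c)
      = Matrix.toEuclideanLin Ai (∑' n : ℕ, Matrix.toEuclideanLin (B ^ n) c) := by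
  have hs := tEL_summable B β hβ hβ1 c
  calc (∑' n : ℕ, Matrix.toEuclideanLin (Ai * B ^ n) c)
      = ∑' n : ℕ, mLin Ai (Matrix.toEuclideanLin (B ^ n) c) := by
        congr 1; funext n; rw [tEL_mul]; rfl
    _ = mLin Ai (∑' n : ℕ, Matrix.toEuclideanLin (B ^ n) c) := ((mLin Ai).map_tsum hs).symm
    _ = _ := rfl

/-- determinant of two planar vectors -/
def det2 (u v : E2) : ℝ := u 0 * v 1 - u 1 * v 0

lemma mem_openSeg_iff {x y z : E2} (hxy : x ≠ y) :
    z ∈ segment ℝ x y \ ({x, y} : Set E2) ↔ ∃ s : ℝ, s ∈ Ioo (0:ℝ) 1 ∧ z = x + s • (y - x) := by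
  have hyx : y - x ≠ 0 := sub_ne_zero.mpr (Ne.symm hxy)
  constructor
  · rintro ⟨hz, hz2⟩
    rw [segment_eq_image' ℝ x y] at hz
    obtain ⟨s, hs, rfl⟩ := hz
    refine ⟨s, ⟨?_, ?_⟩, rfl⟩
    · rcases lt_or_eq_of_le hs.1 with h | h
      · exact h
      · exfalso; apply hz2; left
        show x + s • (y - x) = x
        rw [← h, zero_smul, add_zero]
    · rcases lt_or_eq_of_le hs.2 with h | h
      · exact h
      · exfalso; apply hz2; right
        show x + s • (y - x) ∈ ({y} : Set E2)
        rw [h]; simp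
  · rintro ⟨s, hs, rfl⟩
    constructor
    · rw [segment_eq_image' ℝ x y]
      exact ⟨s, ⟨le_of_lt hs.1, le_of_lt hs.2⟩, rfl⟩
    · intro hmem
      rcases hmem with h | h
      · have : s • (y - x) = 0 := by
          have := h
          have h2 : x + s • (y - x) = x := this
          linear_combination (norm := abel) h2
        rcases smul_eq_zero.mp this with h' | h'
        · exact absurd h' (ne_of_gt hs.1)
        · exact hyx h'
      · simp only [mem_singleton_iff] at h
        have h2 : (s - 1) • (y - x) = 0 := by
          have : x + s • (y - x) = y := h
          have h3 : s • (y - x) - (y - x) = 0 := by linear_combination (norm := abel) this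
          rw [sub_smul, one_smul]; exact h3
        rcases smul_eq_zero.mp h2 with h' | h'
        · have : s = 1 := by linarith [sub_eq_zero.mp h']
          exact absurd this (ne_of_lt hs.2)
        · exact hyx h'

lemma closed_seg_mem {x y : E2} {s : ℝ} (hs : s ∈ Icc (0:ℝ) 1) : x + s • (y - x) ∈ segment ℝ x y := by
  rw [segment_eq_image' ℝ x y]; exact ⟨s, hs, rfl⟩

lemma E2_eq_iff {v w : E2} : v = w ↔ v 0 = w 0 ∧ v 1 = w 1 := by
  constructor
  · rintro rfl; exact ⟨rfl, rfl⟩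
  · rintro ⟨h0, h1⟩; ext i
    rcases i with ⟨i, hi⟩; interval_cases i
    · exact h0
    · exact h1

/-- 2D Cramer identity: if `det2 u v ≠ 0` then `w` decomposes. -/
lemma cramer2 {u v w : E2} (h : det2 u v ≠ 0) :
    (det2 w v / det2 u v) • u - (- det2 u w / det2 u v) • v = w := by
  rw [E2_eq_iff]
  unfold det2 at *
  constructor
  · simp only [PiLp.sub_apply, PiLp.smul_apply, smul_eq_mul]
    rw [div_mul_eq_mul_div, div_mul_eq_mul_div, ← sub_div, div_eq_iff h]
    ring
  · simp only [PiLp.sub_apply, PiLp.smul_apply, smul_eq_mul]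
    rw [div_mul_eq_mul_div, div_mul_eq_mul_div, ← sub_div, div_eq_iff h]
    ring

lemma det2_zero_parallel {u v : E2} (hu : u ≠ 0) (hv : v ≠ 0) (hd : det2 u v = 0) :
    ∃ μ : ℝ, μ ≠ 0 ∧ v = μ • u := by
  unfold det2 at hd
  have hu' : u 0 ≠ 0 ∨ u 1 ≠ 0 := by
    by_contra hc
    push_neg at hc
    exact hu (E2_eq_iff.mpr ⟨hc.1, hc.2⟩)
  rcases hu' with h0 | h1
  · refine ⟨v 0 / u 0, ?_, ?_⟩
    · intro hc
      have hv0 : v 0 = 0 := by field_simp at hc; simpa using hc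
      have hv1 : v 1 = 0 := by
        have := hd
        rw [hv0] at this
        rcases mul_eq_zero.mp (by linarith : u 0 * v 1 = 0) with h | h
        · exact absurd h h0
        · exact h
      exact hv (E2_eq_iff.mpr ⟨hv0, hv1⟩)
    · rw [E2_eq_iff]
      constructor
      · simp only [PiLp.smul_apply, smul_eq_mul]; field_simp
      · simp only [PiLp.smul_apply, smul_eq_mul]; field_simp; linarith [hd]
  · refine ⟨v 1 / u 1, ?_, ?_⟩
    · intro hc
      have hv1 : v 1 = 0 := by field_simp at hc; simpa using hc
      have hv0 : v 0 = 0 := by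
        rw [hv1] at hd
        rcases mul_eq_zero.mp (by linarith : u 1 * v 0 = 0) with h | h
        · exact absurd h h1
        · exact h
      exact hv (E2_eq_iff.mpr ⟨hv0, hv1⟩)
    · rw [E2_eq_iff]
      constructor
      · simp only [PiLp.smul_apply, smul_eq_mul]; field_simp; linarith [hd]
      · simp only [PiLp.smul_apply, smul_eq_mul]; field_simp

lemma crossing_data {x1 y1 x2 y2 : E2}
    (h : ∃ p : E2, (segment ℝ x1 y1 \ {x1, y1}) ∩ (segment ℝ x2 y2 \ {x2, y2}) = {p}) :
    x1 ≠ y1 ∧ x2 ≠ y2 ∧ ∃ s t : ℝ, s ∈ Ioo (0:ℝ) 1 ∧ t ∈ Ioo (0:ℝ) 1 ∧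
      x1 + s • (y1 - x1) = x2 + t • (y2 - x2) ∧ det2 (y1 - x1) (y2 - x2) ≠ 0 := by
  obtain ⟨p, hp⟩ := h
  have hpmem : p ∈ (segment ℝ x1 y1 \ {x1, y1}) ∩ (segment ℝ x2 y2 \ {x2, y2}) := by
    rw [hp]; rfl
  have hxy1 : x1 ≠ y1 := by
    rintro rfl
    have := hpmem.1
    rw [segment_same] at this
    exact this.2 (Or.inl this.1)
  have hxy2 : x2 ≠ y2 := by
    rintro rfl
    have := hpmem.2
    rw [segment_same] at this
    exact this.2 (Or.inl this.1)
  obtain ⟨s, hs, hps⟩ := (mem_openSeg_iff hxy1).mp hpmem.1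
  obtain ⟨t, ht, hpt⟩ := (mem_openSeg_iff hxy2).mp hpmem.2
  refine ⟨hxy1, hxy2, s, t, hs, ht, by rw [← hps, ← hpt], ?_⟩
  intro hd
  set u := y1 - x1 with hu
  set v := y2 - x2 with hv
  have hune : u ≠ 0 := sub_ne_zero.mpr (Ne.symm hxy1)
  have hvne : v ≠ 0 := sub_ne_zero.mpr (Ne.symm hxy2)
  obtain ⟨μ, hμ, hvu⟩ := det2_zero_parallel hune hvne hd
  -- construct a second intersection point
  set η := min (min s (1 - s)) (|μ| * min t (1 - t)) with hη
  have hη0 : 0 < η := by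
    apply lt_min
    · exact lt_min hs.1 (by linarith [hs.2])
    · apply mul_pos (abs_pos.mpr hμ) (lt_min ht.1 (by linarith [ht.2]))
  set r := η / 2 with hr
  have hr0 : 0 < r := by positivity
  have hrs : s + r ∈ Ioo (0:ℝ) 1 := by
    constructor
    · linarith [hs.1]
    · have : r < 1 - s := by
        have h1 : η ≤ 1 - s := le_trans (min_le_left _ _) (min_le_right _ _)
        linarith
      linarith
  have hrt : t + r / μ ∈ Ioo (0:ℝ) 1 := by
    have habs : |r / μ| < min t (1 - t) := by
      rw [abs_div, abs_of_pos hr0]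
      rw [div_lt_iff₀ (abs_pos.mpr hμ)]
      have h1 : η ≤ |μ| * min t (1 - t) := min_le_right _ _
      have h2 : 0 < |μ| * min t (1 - t) := by
        apply mul_pos (abs_pos.mpr hμ) (lt_min ht.1 (by linarith [ht.2]))
      calc r = η / 2 := rfl
        _ < η := by linarith
        _ ≤ |μ| * min t (1 - t) := h1
        _ = min t (1 - t) * |μ| := by ring
    have h3 := abs_lt.mp habs
    constructor
    · have := lt_of_lt_of_le (neg_lt_neg (lt_of_lt_of_le habs (min_le_left _ _))) (le_refl _)
      have h4 : -(t) < r / μ := by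
        have := h3.1
        have h5 : min t (1-t) ≤ t := min_le_left _ _
        linarith
      linarith
    · have h6 : r / μ < 1 - t := lt_of_lt_of_le h3.2 (min_le_right _ _)
      linarith
  -- the point p + r • u lies in both open segments
  have hmem1 : p + r • u ∈ segment ℝ x1 y1 \ {x1, y1} := by
    rw [mem_openSeg_iff hxy1]
    exact ⟨s + r, hrs, by rw [hps, add_smul]; abel⟩
  have hmem2 : p + r • u ∈ segment ℝ x2 y2 \ {x2, y2} := by
    rw [mem_openSeg_iff hxy2]
    refine ⟨t + r / μ, hrt, ?_⟩
    rw [hpt, add_smul]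
    have : (r / μ) • v = r • u := by
      rw [hvu, smul_smul]
      congr 1
      field_simp
    rw [this]; abel
  have : p + r • u = p := by
    have hmm : p + r • u ∈ ({p} : Set E2) := by rw [← hp]; exact ⟨hmem1, hmem2⟩
    exact hmm
  have : r • u = 0 := by linear_combination (norm := abel) this
  rcases smul_eq_zero.mp this with h' | h'
  · exact absurd h' (ne_of_gt hr0)
  · exact hune h'

lemma det2_smul_comb (s t : ℝ) (u v : E2) :
    det2 (s • u - t • v) v = s * det2 u v ∧ det2 u (s • u - t • v) = - t * det2 u v := by
  unfold det2
  simp only [PiLp.sub_apply, PiLp.smul_apply, smul_eq_mul]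
  constructor <;> ring

lemma crossing_persist {x1 y1 x2 y2 : E2} {s t : ℝ} (hs : s ∈ Ioo (0:ℝ) 1) (ht : t ∈ Ioo (0:ℝ) 1)
    (heq : x1 + s • (y1 - x1) = x2 + t • (y2 - x2)) (hd : det2 (y1 - x1) (y2 - x2) ≠ 0) :
    ∃ δ : ℝ, 0 < δ ∧ ∀ x1' y1' x2' y2' : E2, dist x1' x1 < δ → dist y1' y1 < δ →
      dist x2' x2 < δ → dist y2' y2 < δ →
      ∃ z : E2, z ∈ segment ℝ x1' y1' ∧ z ∈ segment ℝ x2' y2' := by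
  classical
  set dfun : E2 × E2 × E2 × E2 → ℝ := fun q => det2 (q.2.1 - q.1) (q.2.2.2 - q.2.2.1) with hdfun
  set sfun : E2 × E2 × E2 × E2 → ℝ :=
    fun q => det2 (q.2.2.1 - q.1) (q.2.2.2 - q.2.2.1) / dfun q with hsfun
  set tfun : E2 × E2 × E2 × E2 → ℝ :=
    fun q => - det2 (q.2.1 - q.1) (q.2.2.1 - q.1) / dfun q with htfun
  set base : E2 × E2 × E2 × E2 := (x1, y1, x2, y2) with hbase
  have hw : x2 - x1 = s • (y1 - x1) - t • (y2 - x2) := by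
    linear_combination (norm := abel) - heq
  have hdbase : dfun base = det2 (y1 - x1) (y2 - x2) := rfl
  have hsbase : sfun base = s := by
    show det2 (x2 - x1) (y2 - x2) / dfun base = s
    rw [hw, (det2_smul_comb s t (y1 - x1) (y2 - x2)).1, hdbase]
    field_simp
  have htbase : tfun base = t := by
    show - det2 (y1 - x1) (x2 - x1) / dfun base = t
    rw [hw, (det2_smul_comb s t (y1 - x1) (y2 - x2)).2, hdbase]
    field_simp
  have hdcont : Continuous dfun := by unfold dfun; unfold det2; fun_prop
  have hncont1 : Continuous (fun q : E2 × E2 × E2 × E2 => det2 (q.2.2.1 - q.1) (q.2.2.2 - q.2.2.1)) := by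
    unfold det2; fun_prop
  have hncont2 : Continuous (fun q : E2 × E2 × E2 × E2 => - det2 (q.2.1 - q.1) (q.2.2.1 - q.1)) := by
    unfold det2; fun_prop
  have hdne : dfun base ≠ 0 := by rw [hdbase]; exact hd
  have hscont : ContinuousAt sfun base := (hncont1.continuousAt).div hdcont.continuousAt hdne
  have htcont : ContinuousAt tfun base := (hncont2.continuousAt).div hdcont.continuousAt hdne
  have hev : ∀ᶠ q in nhds base, sfun q ∈ Ioo (0:ℝ) 1 ∧ tfun q ∈ Ioo (0:ℝ) 1 ∧ dfun q ≠ 0 := by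
    have h1 : ∀ᶠ q in nhds base, sfun q ∈ Ioo (0:ℝ) 1 :=
      hscont.eventually_mem (isOpen_Ioo.mem_nhds (hsbase ▸ hs))
    have h2 : ∀ᶠ q in nhds base, tfun q ∈ Ioo (0:ℝ) 1 :=
      htcont.eventually_mem (isOpen_Ioo.mem_nhds (htbase ▸ ht))
    have h3 : ∀ᶠ q in nhds base, dfun q ≠ 0 :=
      hdcont.continuousAt.eventually_mem (isOpen_compl_singleton.mem_nhds hdne)
    filter_upwards [h1, h2, h3] with q hq1 hq2 hq3
    exact ⟨hq1, hq2, hq3⟩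
  rw [Metric.eventually_nhds_iff] at hev
  obtain ⟨δ, hδ0, hδ⟩ := hev
  refine ⟨δ, hδ0, ?_⟩
  intro x1' y1' x2' y2' h1 h2 h3 h4
  set q : E2 × E2 × E2 × E2 := (x1', y1', x2', y2') with hq
  have hqd : dist q base < δ := by
    rw [Prod.dist_eq]
    apply max_lt h1
    rw [Prod.dist_eq]
    apply max_lt h2
    rw [Prod.dist_eq]
    exact max_lt h3 h4
  obtain ⟨hsq, htq, hdq⟩ := hδ hqd
  have hcram := cramer2 (u := y1' - x1') (v := y2' - x2') (w := x2' - x1') hdq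
  set sq := sfun q with hsqdef
  set tq := - det2 (y1' - x1') (x2' - x1') / dfun q with htqdef
  have htq' : tfun q = tq := rfl
  have hcram' : sq • (y1' - x1') - tq • (y2' - x2') = x2' - x1' := by
    have : sq = det2 (x2' - x1') (y2' - x2') / det2 (y1' - x1') (y2' - x2') := rfl
    rw [this, htqdef]
    exact hcram
  refine ⟨x1' + sq • (y1' - x1'), closed_seg_mem ⟨le_of_lt hsq.1, le_of_lt hsq.2⟩, ?_⟩
  have hzeq : x1' + sq • (y1' - x1') = x2' + tq • (y2' - x2') := by
    linear_combination (norm := abel) hcram'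
  rw [hzeq]
  rw [htq'] at htq
  exact closed_seg_mem ⟨le_of_lt htq.1, le_of_lt htq.2⟩

open RealInnerProductSpace in
lemma proj_lower {u v : E2} (hd : det2 u v ≠ 0) :
    ∃ c : ℝ, 0 < c ∧ ∀ e : E2, ‖e‖ = 1 → c ≤ max |⟪u, e⟫| |⟪v, e⟫| := by
  have hcont : Continuous (fun e : E2 => max |⟪u, e⟫| |⟪v, e⟫|) := by
    apply Continuous.max
    · exact (continuous_const.inner continuous_id).abs
    · exact (continuous_const.inner continuous_id).abs
  have hcpt : IsCompact (Metric.sphere (0 : E2) 1) := isCompact_sphere 0 1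
  have hne : (Metric.sphere (0 : E2) 1).Nonempty := by
    apply NormedSpace.sphere_nonempty.mpr; norm_num
  obtain ⟨e₀, he₀, hmin⟩ := hcpt.exists_isMinOn hne hcont.continuousOn
  refine ⟨max |⟪u, e₀⟫| |⟪v, e₀⟫|, ?_, ?_⟩
  · have hm0 : (0:ℝ) ≤ max |⟪u, e₀⟫| |⟪v, e₀⟫| := le_max_of_le_left (abs_nonneg _)
    rcases hm0.lt_or_eq with h | h
    · exact h
    · exfalso
      have h1 : |⟪u, e₀⟫| = 0 := le_antisymm (h ▸ le_max_left _ _) (abs_nonneg _)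
      have h2 : |⟪v, e₀⟫| = 0 := le_antisymm (h ▸ le_max_right _ _) (abs_nonneg _)
      have hi1 : u 0 * e₀ 0 + u 1 * e₀ 1 = 0 := by
        rw [← E2_inner]; exact abs_eq_zero.mp h1
      have hi2 : v 0 * e₀ 0 + v 1 * e₀ 1 = 0 := by
        rw [← E2_inner]; exact abs_eq_zero.mp h2
      unfold det2 at hd
      have he00 : e₀ 0 = 0 := by
        have hc : (u 0 * v 1 - u 1 * v 0) * e₀ 0 = 0 := by linear_combination v 1 * hi1 - u 1 * hi2
        rcases mul_eq_zero.mp hc with h | h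
        · exact absurd h hd
        · exact h
      have he01 : e₀ 1 = 0 := by
        have hc : (u 0 * v 1 - u 1 * v 0) * e₀ 1 = 0 := by linear_combination u 0 * hi2 - v 0 * hi1
        rcases mul_eq_zero.mp hc with h | h
        · exact absurd h hd
        · exact h
      have : e₀ = 0 := E2_eq_iff.mpr ⟨he00, he01⟩
      rw [mem_sphere_iff_norm, sub_zero] at he₀
      rw [this] at he₀
      simp at he₀
  · intro e he
    exact hmin (by rwa [mem_sphere_iff_norm, sub_zero])

open RealInnerProductSpace in
lemma projection_eq_Icc
    {κ : ℕ} (B : Fin κ → Matrix (Fin 2) (Fin 2) ℝ) (b : Fin κ → E2)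
    {β : ℝ} (hβ1 : β < 1) (hβ0 : 0 ≤ β)
    (hnormB : ∀ i, ‖mLin (B i)‖ ≤ β)
    {E' : Set E2} (hne : E'.Nonempty) (hc : IsCompact E')
    (hattr : E' = ⋃ i, (fun v => Matrix.toEuclideanLin (B i) v + b i) '' E')
    (N : Matrix (Fin κ) (Fin κ) ℝ)
    (hNnn : ∀ i j, 0 ≤ N i j)
    (hlink : ∀ i j, 0 < N i j → ∃ z : E2,
      (∃ x ∈ (fun v => Matrix.toEuclideanLin (B i) v + b i) '' E',
       ∃ y ∈ (fun v => Matrix.toEuclideanLin (B i) v + b i) '' E', z ∈ segment ℝ x y) ∧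
      (∃ x ∈ (fun v => Matrix.toEuclideanLin (B j) v + b j) '' E',
       ∃ y ∈ (fun v => Matrix.toEuclideanLin (B j) v + b j) '' E', z ∈ segment ℝ x y))
    (hirr : ∀ i j, ∃ n : ℕ, 0 < n ∧ 0 < (N ^ n) i j) :
    ∀ e : E2, (fun v => ⟪v, e⟫) '' E' =
      Icc (sInf ((fun v => ⟪v, e⟫) '' E')) (sSup ((fun v => ⟪v, e⟫) '' E')) := by
  classical
  -- bound on E'
  obtain ⟨R, hR⟩ : ∃ R : ℝ, ∀ v ∈ E', ‖v‖ ≤ R := by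
    obtain ⟨R, hR⟩ := hc.isBounded.subset_closedBall 0
    exact ⟨R, fun v hv => by simpa [Metric.mem_closedBall, dist_eq_norm] using hR hv⟩
  have hR0 : 0 ≤ R := le_trans (norm_nonneg _) (hR _ hne.some_mem)
  set S : E2 → Set ℝ := fun e => (fun v => ⟪v, e⟫) '' E' with hS
  have hScpt : ∀ e, IsCompact (S e) := fun e =>
    hc.image ((continuous_id.inner continuous_const))
  have hSne : ∀ e, (S e).Nonempty := fun e => hne.image _
  have hSbdd : ∀ e, ∀ r ∈ S e, |r| ≤ R * ‖e‖ := by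
    rintro e r ⟨v, hv, rfl⟩
    calc |⟪v, e⟫| ≤ ‖v‖ * ‖e‖ := abs_real_inner_le_norm v e
      _ ≤ R * ‖e‖ := by gcongr; exact hR v hv
  have hSsub : ∀ e, S e ⊆ Icc (sInf (S e)) (sSup (S e)) := fun e r hr =>
    ⟨csInf_le (hScpt e).isBounded.bddBelow hr, le_csSup (hScpt e).isBounded.bddAbove hr⟩
  have hms : ∀ e, sInf (S e) ≤ sSup (S e) := fun e =>
    csInf_le_csSup (hSne e) (hScpt e).isBounded.bddBelow (hScpt e).isBounded.bddAbove
  -- the key contraction estimate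
  have key : ∀ n : ℕ, ∀ e : E2, ∀ z ∈ Icc (sInf (S e)) (sSup (S e)),
      Metric.infDist z (S e) ≤ 2 * R * ‖e‖ * β ^ n := by
    intro n
    induction n with
    | zero =>
      intro e z hz
      obtain ⟨w, hw⟩ := hSne e
      have hwB := hSbdd e w hw
      have h1 : Metric.infDist z (S e) ≤ dist z w := Metric.infDist_le_dist_of_mem hw
      have h2 : -(R * ‖e‖) ≤ sInf (S e) := by
        apply le_csInf (hSne e)
        intro r hr; linarith [abs_le.mp (hSbdd e r hr)]
      have h3 : sSup (S e) ≤ R * ‖e‖ := by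
        apply csSup_le (hSne e)
        intro r hr; linarith [abs_le.mp (hSbdd e r hr)]
      have h4 : |z - w| ≤ 2 * R * ‖e‖ := by
        have hzi := hz.1; have hzs := hz.2
        have hw1 : -(R * ‖e‖) ≤ w := by linarith [abs_le.mp hwB]
        have hw2 : w ≤ R * ‖e‖ := by linarith [abs_le.mp hwB]
        rw [abs_le]; constructor <;> nlinarith
      calc Metric.infDist z (S e) ≤ dist z w := h1
        _ = |z - w| := Real.dist_eq z w
        _ ≤ 2 * R * ‖e‖ := h4
        _ = 2 * R * ‖e‖ * β ^ 0 := by simp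
    | succ n ih =>
      intro e z hz
      set ei : Fin κ → E2 := fun i => Matrix.toEuclideanLin (B i)ᵀ e with hei
      set ci : Fin κ → ℝ := fun i => ⟪b i, e⟫ with hci
      set T : Fin κ → Set ℝ := fun i => (fun r => r + ci i) '' S (ei i) with hT
      have hTeq : ∀ i, (fun v => ⟪v, e⟫) '' ((fun v => Matrix.toEuclideanLin (B i) v + b i) '' E') = T i := by
        intro i
        rw [← image_comp]
        show _ = (fun r => r + ci i) '' ((fun v => ⟪v, ei i⟫) '' E')
        rw [← image_comp]
        apply image_congr
        intro v hv
        show ⟪Matrix.toEuclideanLin (B i) v + b i, e⟫ = ⟪v, ei i⟫ + ci i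
        rw [inner_add_left, inner_tEL]
      have hSeq : S e = ⋃ i, T i := by
        show (fun v => ⟪v, e⟫) '' E' = _
        conv_lhs => rw [hattr]
        rw [image_iUnion]
        exact iUnion_congr hTeq
      set J : Fin κ → Set ℝ := fun i => Icc (sInf (S (ei i)) + ci i) (sSup (S (ei i)) + ci i) with hJ
      have hTJ : ∀ i, T i ⊆ J i := by
        rintro i r ⟨w, hw, rfl⟩
        show w + ci i ∈ Icc _ _
        exact ⟨by linarith [(hSsub (ei i) hw).1], by linarith [(hSsub (ei i) hw).2]⟩
      -- z belongs to some J i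
      have hzJ : ∃ i, z ∈ J i := by
        by_contra hcon
        push_neg at hcon
        -- Left/Right dichotomy
        have hLR : ∀ i, (sSup (S (ei i)) + ci i < z) ∨ (z < sInf (S (ei i)) + ci i) := by
          intro i
          rcases lt_or_ge z (sInf (S (ei i)) + ci i) with h | h
          · exact Or.inr h
          · left
            by_contra h2
            push_neg at h2
            exact hcon i ⟨h, h2⟩
        set Lft : Fin κ → Prop := fun i => sSup (S (ei i)) + ci i < z with hLft
        have hnotboth : ∀ i, Lft i → ¬ (z < sInf (S (ei i)) + ci i) := by
          intro i hL hRt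
          have := hms (ei i)
          rw [hLft] at hL
          linarith
        -- endpoints
        obtain ⟨i₀, hi₀⟩ : ∃ i, sInf (S e) ∈ T i := by
          have h' : sInf (S e) ∈ ⋃ i, T i := by
            rw [← hSeq]; exact (hScpt e).sInf_mem (hSne e)
          exact mem_iUnion.mp h'
        obtain ⟨i₁, hi₁⟩ : ∃ i, sSup (S e) ∈ T i := by
          have h' : sSup (S e) ∈ ⋃ i, T i := by
            rw [← hSeq]; exact (hScpt e).sSup_mem (hSne e)
          exact mem_iUnion.mp h'
        have hLi₀ : Lft i₀ := by
          rcases hLR i₀ with h | h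
          · exact h
          · exfalso
            have := (hTJ i₀ hi₀).1
            linarith [hz.1]
        have hRi₁ : ¬ Lft i₁ := by
          intro h
          have := (hTJ i₁ hi₁).2
          rw [hLft] at h
          linarith [hz.2]
        -- edges propagate Left
        have hedge : ∀ i j, 0 < N i j → Lft i → Lft j := by
          intro i j hN hL
          obtain ⟨z₀, ⟨xi, hxi, yi, hyi, hzi⟩, ⟨xj, hxj, yj, hyj, hzj⟩⟩ := hlink i j hN
          have hproj : ∀ k (xk yk : E2), xk ∈ (fun v => Matrix.toEuclideanLin (B k) v + b k) '' E' →
              yk ∈ (fun v => Matrix.toEuclideanLin (B k) v + b k) '' E' →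
              z₀ ∈ segment ℝ xk yk → ⟪z₀, e⟫ ∈ J k := by
            intro k xk yk hxk hyk hseg
            have hxkT : ⟪xk, e⟫ ∈ T k := by rw [← hTeq k]; exact mem_image_of_mem _ hxk
            have hykT : ⟪yk, e⟫ ∈ T k := by rw [← hTeq k]; exact mem_image_of_mem _ hyk
            obtain ⟨p, q, hp, hq, hpq, hcomb⟩ := hseg
            have : ⟪z₀, e⟫ = p * ⟪xk, e⟫ + q * ⟪yk, e⟫ := by
              rw [← hcomb, inner_add_left, inner_smul_left, inner_smul_left]
              norm_num
            have h1 := (hTJ k hxkT).1; have h2 := (hTJ k hxkT).2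
            have h3 := (hTJ k hykT).1; have h4 := (hTJ k hykT).2
            constructor
            · rw [this]
              calc sInf (S (ei k)) + ci k = p * (sInf (S (ei k)) + ci k) + q * (sInf (S (ei k)) + ci k) := by
                    rw [← add_mul, hpq, one_mul]
                _ ≤ p * ⟪xk, e⟫ + q * ⟪yk, e⟫ :=
                    add_le_add (mul_le_mul_of_nonneg_left h1 hp) (mul_le_mul_of_nonneg_left h3 hq)
            · rw [this]
              calc p * ⟪xk, e⟫ + q * ⟪yk, e⟫ ≤ p * (sSup (S (ei k)) + ci k) + q * (sSup (S (ei k)) + ci k) :=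
                    add_le_add (mul_le_mul_of_nonneg_left h2 hp) (mul_le_mul_of_nonneg_left h4 hq)
                _ = sSup (S (ei k)) + ci k := by rw [← add_mul, hpq, one_mul]
          have hJi := hproj i xi yi hxi hyi hzi
          have hJj := hproj j xj yj hxj hyj hzj
          rcases hLR j with h | h
          · exact h
          · exfalso
            rw [hLft] at hL
            have := hJi.2
            have := hJj.1
            linarith
        -- powers nonneg
        have hpow_nn : ∀ n : ℕ, ∀ i j, 0 ≤ (N ^ n) i j := by
          intro n
          induction n with
          | zero => intro i j; rw [pow_zero]; by_cases h : i = j <;> simp [Matrix.one_apply, h]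
          | succ n ihn =>
            intro i j
            rw [pow_succ']
            rw [Matrix.mul_apply]
            apply Finset.sum_nonneg
            intro k _
            exact mul_nonneg (hNnn i k) (ihn k j)
        -- walk lemma
        have hwalk : ∀ n : ℕ, ∀ k, Lft k → 0 < (N ^ n) k i₁ → False := by
          intro n
          induction n with
          | zero =>
            intro k hL hpos
            rw [pow_zero] at hpos
            by_cases h : k = i₁
            · subst h; exact hRi₁ hL
            · rw [Matrix.one_apply_ne h] at hpos; exact lt_irrefl _ hpos
          | succ n ihn =>
            intro k hL hpos
            rw [pow_succ', Matrix.mul_apply] at hpos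
            have : ∃ k' ∈ (Finset.univ : Finset (Fin κ)), 0 < N k k' * (N ^ n) k' i₁ := by
              by_contra hcc
              push_neg at hcc
              have : ∑ k', N k k' * (N ^ n) k' i₁ ≤ 0 :=
                Finset.sum_nonpos (fun k' hk' => hcc k' hk')
              linarith
            obtain ⟨k', _, hk'⟩ := this
            have hN1 : 0 < N k k' := by
              rcases lt_or_eq_of_le (hNnn k k') with h | h
              · exact h
              · exfalso; rw [← h] at hk'; simp at hk'
            have hN2 : 0 < (N ^ n) k' i₁ := by
              rcases lt_or_eq_of_le (hpow_nn n k' i₁) with h | h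
              · exact h
              · exfalso; rw [← h] at hk'; simp at hk'
            exact ihn k' (hedge k k' hN1 hL) hN2
        obtain ⟨n, _, hn⟩ := hirr i₀ i₁
        exact hwalk n i₀ hLi₀ hn
      obtain ⟨i, hzi⟩ := hzJ
      -- use the inductive hypothesis on the translated point
      have hz' : z - ci i ∈ Icc (sInf (S (ei i))) (sSup (S (ei i))) :=
        ⟨by linarith [hzi.1], by linarith [hzi.2]⟩
      have hIH := ih (ei i) (z - ci i) hz'
      obtain ⟨w, hw, hwd⟩ := (hScpt (ei i)).exists_infDist_eq_dist (hSne (ei i)) (z - ci i)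
      have hwS : w + ci i ∈ S e := by
        rw [hSeq]
        exact mem_iUnion.mpr ⟨i, ⟨w, hw, rfl⟩⟩
      have hnormei : ‖ei i‖ ≤ β * ‖e‖ := tEL_transpose_norm_le (B i) β (hnormB i) e
      calc Metric.infDist z (S e) ≤ dist z (w + ci i) := Metric.infDist_le_dist_of_mem hwS
        _ = dist (z - ci i) w := by rw [Real.dist_eq, Real.dist_eq]; congr 1; ring
        _ = Metric.infDist (z - ci i) (S (ei i)) := hwd.symm
        _ ≤ 2 * R * ‖ei i‖ * β ^ n := hIH
        _ ≤ 2 * R * (β * ‖e‖) * β ^ n := by gcongr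
        _ = 2 * R * ‖e‖ * β ^ (n + 1) := by ring
  -- conclude
  intro e
  apply Subset.antisymm (hSsub e)
  intro z hz
  have h0 : Metric.infDist z (S e) ≤ 0 := by
    have hlim : Filter.Tendsto (fun n : ℕ => 2 * R * ‖e‖ * β ^ n) Filter.atTop (nhds 0) := by
      have := tendsto_pow_atTop_nhds_zero_of_lt_one hβ0 hβ1
      simpa using this.const_mul (2 * R * ‖e‖)
    exact le_of_tendsto_of_tendsto' tendsto_const_nhds hlim (fun n => key n e z hz)
  have h1 : Metric.infDist z (S e) = 0 := le_antisymm h0 Metric.infDist_nonneg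
  exact ((hScpt e).isClosed.mem_iff_infDist_zero (hSne e)).mpr h1

lemma affine_lipschitz (B : Matrix (Fin 2) (Fin 2) ℝ) (b : E2) {β : ℝ} (hβ : ‖mLin B‖ ≤ β)
    (v w : E2) : dist (Matrix.toEuclideanLin B v + b) (Matrix.toEuclideanLin B w + b) ≤ β * dist v w := by
  rw [dist_eq_norm, dist_eq_norm]
  have h1 : (Matrix.toEuclideanLin B v + b) - (Matrix.toEuclideanLin B w + b)
      = mLin B (v - w) := by
    show _ = Matrix.toEuclideanLin B (v - w)
    rw [map_sub]
    abel
  rw [h1]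
  calc ‖mLin B (v - w)‖ ≤ ‖mLin B‖ * ‖v - w‖ := (mLin B).le_opNorm _
    _ ≤ β * ‖v - w‖ := by gcongr

lemma fixed_in_attr (B : Matrix (Fin 2) (Fin 2) ℝ) (b : E2) {β : ℝ} (hβ : ‖mLin B‖ ≤ β)
    (hβ0 : 0 ≤ β) (hβ1 : β < 1)
    {E' : Set E2} (hne : E'.Nonempty) (hc : IsCompact E')
    (hsub : (fun v => Matrix.toEuclideanLin B v + b) '' E' ⊆ E') :
    ∃ p ∈ E', Matrix.toEuclideanLin B p + b = p := by
  set f : E2 → E2 := fun v => Matrix.toEuclideanLin B v + b with hf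
  set K : NNReal := ⟨β, hβ0⟩ with hK
  have hlip : LipschitzWith K f := by
    apply LipschitzWith.of_dist_le_mul
    intro v w
    exact affine_lipschitz B b hβ v w
  have hcontr : ContractingWith K f := by
    constructor
    · exact_mod_cast hβ1
    · exact hlip
  have hsf : MapsTo f E' E' := fun v hv => hsub (mem_image_of_mem f hv)
  obtain ⟨p, hp, hfix, _, _⟩ := (hcontr.restrict hsf).exists_fixedPoint'
    hc.isClosed.isComplete hsf hne.some_mem (edist_ne_top _ _)
  exact ⟨p, hp, hfix⟩

lemma pow_entries_nonneg {κ : ℕ} (N : Matrix (Fin κ) (Fin κ) ℝ) (h : ∀ i j, 0 ≤ N i j) :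
    ∀ n i j, 0 ≤ (N ^ n) i j := by
  intro n
  induction n with
  | zero => intro i j; rw [pow_zero]; by_cases hij : i = j <;> simp [Matrix.one_apply, hij]
  | succ n ihn =>
    intro i j
    rw [pow_succ', Matrix.mul_apply]
    exact Finset.sum_nonneg fun k _ => mul_nonneg (h i k) (ihn k j)

lemma pos_entry_step {κ : ℕ} (N : Matrix (Fin κ) (Fin κ) ℝ) (h : ∀ i j, 0 ≤ N i j)
    {n : ℕ} {i j : Fin κ} (hp : 0 < (N ^ (n + 1)) i j) : ∃ k, 0 < N i k ∧ 0 < (N ^ n) k j := by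
  rw [pow_succ', Matrix.mul_apply] at hp
  have : ∃ k ∈ (Finset.univ : Finset (Fin κ)), 0 < N i k * (N ^ n) k j := by
    by_contra hcc
    push_neg at hcc
    have : ∑ k, N i k * (N ^ n) k j ≤ 0 := Finset.sum_nonpos fun k hk => hcc k hk
    linarith
  obtain ⟨k, _, hk⟩ := this
  refine ⟨k, ?_, ?_⟩
  · rcases lt_or_eq_of_le (h i k) with h' | h'
    · exact h'
    · exfalso; rw [← h'] at hk; simp at hk
  · rcases lt_or_eq_of_le (pow_entries_nonneg N h n k j) with h' | h'
    · exact h'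
    · exfalso; rw [← h'] at hk; simp at hk

set_option maxHeartbeats 2000000 in
/-- Corollary 5.4: an algebraic criterion guaranteeing that, stably under perturbations of
the affine IFS, every linear projection of the attractor is an interval of length bounded
below. Here `x i = π(i 1^∞)` and `y i = π(i κ^∞)` are the fixed-point images. -/
theorem stable_projection_condition (κ : ℕ) (hκ : 2 ≤ κ)
    (A : Fin κ → Matrix (Fin 2) (Fin 2) ℝ) (a : Fin κ → E2)
    (ᾱ : ℝ) (hᾱ : ᾱ < 1) (hinv : ∀ i, IsUnit (A i).det) (hnorm : ∀ i, a1 (A i) ≤ ᾱ)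
    (E : Set E2) (hEne : E.Nonempty) (hEc : IsCompact E)
    (hattr : E = ⋃ i, (fun v => Matrix.toEuclideanLin (A i) v + a i) '' E)
    (x y : Fin κ → E2)
    (hx : ∀ i, x i = a i + ∑' n : ℕ,
      Matrix.toEuclideanLin (A i * (A ⟨0, by omega⟩) ^ n) (a ⟨0, by omega⟩))
    (hy : ∀ i, y i = a i + ∑' n : ℕ,
      Matrix.toEuclideanLin (A i * (A ⟨κ - 1, by omega⟩) ^ n) (a ⟨κ - 1, by omega⟩))
    (M : Matrix (Fin κ) (Fin κ) ℝ)
    (hM1 : ∀ i j,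
      (∃ p : E2, (segment ℝ (x i) (y i) \ {x i, y i}) ∩
        (segment ℝ (x j) (y j) \ {x j, y j}) = {p}) → M i j = 1)
    (hM0 : ∀ i j,
      ¬ (∃ p : E2, (segment ℝ (x i) (y i) \ {x i, y i}) ∩
        (segment ℝ (x j) (y j) \ {x j, y j}) = {p}) → M i j = 0)
    (hirr : ∀ i j, ∃ n : ℕ, 0 < n ∧ 0 < (M ^ n) i j) :
    ∃ ε : ℝ, 0 < ε ∧ ∃ ϱ : ℝ, 0 < ϱ ∧
      ∀ (A' : Fin κ → Matrix (Fin 2) (Fin 2) ℝ) (a' : Fin κ → E2),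
        (∀ i, IsUnit (A' i).det) → (∀ i, a1 (A' i) < 1) →
        (∀ i r s, |A i r s - A' i r s| < ε) →
        (∀ i r, |(a i - a' i) r| < ε) →
        ∀ E' : Set E2, E'.Nonempty → IsCompact E' →
          E' = ⋃ i, (fun v => Matrix.toEuclideanLin (A' i) v + a' i) '' E' →
          ∀ e : E2, ‖e‖ = 1 →
            Convex ℝ {r : ℝ | ∃ v ∈ E', r = (inner ℝ v e : ℝ)} ∧
            ϱ ≤ sSup {r : ℝ | ∃ v ∈ E', r = (inner ℝ v e : ℝ)} -
                sInf {r : ℝ | ∃ v ∈ E', r = (inner ℝ v e : ℝ)} := by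
  classical
  haveI : NeZero κ := ⟨by omega⟩
  set i1 : Fin κ := ⟨0, by omega⟩ with hi1
  set iκ : Fin κ := ⟨κ - 1, by omega⟩ with hiκ
  have hᾱ0 : 0 ≤ ᾱ := le_trans (norm_nonneg _) (hnorm i1)
  set β : ℝ := (1 + ᾱ) / 2 with hβ
  have hβ0 : 0 ≤ β := by positivity
  have hβ1 : β < 1 := by rw [hβ]; linarith
  have hᾱβ : ᾱ ≤ β := by rw [hβ]; linarith
  set p : E2 := ∑' n : ℕ, Matrix.toEuclideanLin ((A i1) ^ n) (a i1) with hpdef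
  set q : E2 := ∑' n : ℕ, Matrix.toEuclideanLin ((A iκ) ^ n) (a iκ) with hqdef
  have hpfix : Matrix.toEuclideanLin (A i1) p + a i1 = p := tEL_fixed _ ᾱ (hnorm i1) hᾱ _
  have hqfix : Matrix.toEuclideanLin (A iκ) q + a iκ = q := tEL_fixed _ ᾱ (hnorm iκ) hᾱ _
  have hxf : ∀ i, x i = Matrix.toEuclideanLin (A i) p + a i := by
    intro i
    rw [hx i, tEL_tsum_mul (A i) (A i1) ᾱ (hnorm i1) hᾱ (a i1)]
    rw [add_comm]
  have hyf : ∀ i, y i = Matrix.toEuclideanLin (A i) q + a i := by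
    intro i
    rw [hy i, tEL_tsum_mul (A i) (A iκ) ᾱ (hnorm iκ) hᾱ (a iκ)]
    rw [add_comm]
  -- uniform bound on the fixed points
  set P : ℝ := (‖a i1‖ + ‖a iκ‖ + 1) / (1 - ᾱ) with hP
  have h1ᾱ : 0 < 1 - ᾱ := by linarith
  have hpP : ‖p‖ ≤ P := by
    have h1 : ‖p‖ ≤ ᾱ * ‖p‖ + ‖a i1‖ := by
      conv_lhs => rw [← hpfix]
      calc ‖Matrix.toEuclideanLin (A i1) p + a i1‖
          ≤ ‖Matrix.toEuclideanLin (A i1) p‖ + ‖a i1‖ := norm_add_le _ _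
        _ ≤ ᾱ * ‖p‖ + ‖a i1‖ := by
            gcongr
            calc ‖Matrix.toEuclideanLin (A i1) p‖ = ‖mLin (A i1) p‖ := rfl
              _ ≤ ‖mLin (A i1)‖ * ‖p‖ := (mLin _).le_opNorm _
              _ ≤ ᾱ * ‖p‖ := by gcongr; exact hnorm i1
    rw [hP, le_div_iff₀ h1ᾱ]
    nlinarith [norm_nonneg (a iκ)]
  have hqP : ‖q‖ ≤ P := by
    have h1 : ‖q‖ ≤ ᾱ * ‖q‖ + ‖a iκ‖ := by
      conv_lhs => rw [← hqfix]
      calc ‖Matrix.toEuclideanLin (A iκ) q + a iκ‖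
          ≤ ‖Matrix.toEuclideanLin (A iκ) q‖ + ‖a iκ‖ := norm_add_le _ _
        _ ≤ ᾱ * ‖q‖ + ‖a iκ‖ := by
            gcongr
            calc ‖Matrix.toEuclideanLin (A iκ) q‖ = ‖mLin (A iκ) q‖ := rfl
              _ ≤ ‖mLin (A iκ)‖ * ‖q‖ := (mLin _).le_opNorm _
              _ ≤ ᾱ * ‖q‖ := by gcongr; exact hnorm iκ
    rw [hP, le_div_iff₀ h1ᾱ]
    nlinarith [norm_nonneg (a i1)]
  have hP0 : 0 ≤ P := le_trans (norm_nonneg p) hpP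
  have h1β : 0 < 1 - β := by linarith
  set K : ℝ := (4 * P + 2) / (1 - β) + 1 with hK
  have hK1 : 1 ≤ K := by
    rw [hK]
    have : 0 ≤ (4 * P + 2) / (1 - β) := by positivity
    linarith
  have hK0 : 0 < K := by linarith
  -- nonnegativity of M
  have hMnn : ∀ i j, 0 ≤ M i j := by
    intro i j
    by_cases h : (∃ p : E2, (segment ℝ (x i) (y i) \ {x i, y i}) ∩
        (segment ℝ (x j) (y j) \ {x j, y j}) = {p})
    · rw [hM1 i j h]; norm_num
    · rw [hM0 i j h]
  -- a crossing pair exists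
  obtain ⟨istar, jstar, hMs⟩ : ∃ i j, 0 < M i j := by
    obtain ⟨n, hn0, hn⟩ := hirr i1 i1
    obtain ⟨m, rfl⟩ : ∃ m, n = m + 1 := ⟨n - 1, by omega⟩
    obtain ⟨k, hk1, _⟩ := pos_entry_step M hMnn hn
    exact ⟨i1, k, hk1⟩
  have hconds : ∀ i j, 0 < M i j → (∃ p : E2, (segment ℝ (x i) (y i) \ {x i, y i}) ∩
      (segment ℝ (x j) (y j) \ {x j, y j}) = {p}) := by
    intro i j hij
    by_contra h
    rw [hM0 i j h] at hij
    exact lt_irrefl _ hij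
  obtain ⟨_, _, s0, t0, hs0, ht0, heq0, hd0⟩ := crossing_data (hconds istar jstar hMs)
  obtain ⟨c, hc0, hcmax⟩ := proj_lower hd0
  -- perturbation radii for every linked pair
  have hδex : ∀ i j, ∃ δ : ℝ, 0 < δ ∧ ((∃ p : E2, (segment ℝ (x i) (y i) \ {x i, y i}) ∩
      (segment ℝ (x j) (y j) \ {x j, y j}) = {p}) →
      ∀ x1' y1' x2' y2' : E2, dist x1' (x i) < δ → dist y1' (y i) < δ →
        dist x2' (x j) < δ → dist y2' (y j) < δ →
        ∃ z : E2, z ∈ segment ℝ x1' y1' ∧ z ∈ segment ℝ x2' y2') := by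
    intro i j
    by_cases h : (∃ p : E2, (segment ℝ (x i) (y i) \ {x i, y i}) ∩
        (segment ℝ (x j) (y j) \ {x j, y j}) = {p})
    · obtain ⟨_, _, s, t, hs, ht, heq, hd⟩ := crossing_data h
      obtain ⟨δ, hδ0, hδ⟩ := crossing_persist hs ht heq hd
      exact ⟨δ, hδ0, fun _ => hδ⟩
    · exact ⟨1, one_pos, fun h' => absurd h' h⟩
  choose δf hδf0 hδfP using hδex
  have hFne : (Finset.univ : Finset (Fin κ × Fin κ)).Nonempty := Finset.univ_nonempty
  set δmin : ℝ := Finset.inf' Finset.univ hFne (fun ij : Fin κ × Fin κ => δf ij.1 ij.2) with hδmin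
  have hδmin0 : 0 < δmin := by
    rw [hδmin, Finset.lt_inf'_iff]
    exact fun ij _ => hδf0 ij.1 ij.2
  have hδminle : ∀ i j, δmin ≤ δf i j := fun i j =>
    Finset.inf'_le _ (Finset.mem_univ (i, j))
  -- choose ε and ϱ
  set ε : ℝ := min ((1 - ᾱ) / 8) (min δmin (c / 4) / (2 * K)) with hε
  have hε0 : 0 < ε := by
    apply lt_min
    · linarith
    · apply div_pos (lt_min hδmin0 (by linarith)) (by linarith)
  refine ⟨ε, hε0, c / 2, by linarith, ?_⟩
  intro A' a' hinv' hnorm1' hAA' haa' E' hne' hc' hattr' e he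
  -- entrywise bounds on differences
  have hdiff : ∀ i r s, |(A i - A' i) r s| ≤ ε := by
    intro i r s
    rw [Matrix.sub_apply]
    exact le_of_lt (hAA' i r s)
  have hε8 : ε ≤ (1 - ᾱ) / 8 := min_le_left _ _
  have hεK : ε ≤ min δmin (c / 4) / (2 * K) := min_le_right _ _
  -- perturbed operator norms
  have hA'β : ∀ i, ‖mLin (A' i)‖ ≤ β := by
    intro i
    apply ContinuousLinearMap.opNorm_le_bound _ hβ0
    intro v
    have hrepr : mLin (A' i) v = Matrix.toEuclideanLin (A i) v
        - Matrix.toEuclideanLin (A i - A' i) v := by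
      show Matrix.toEuclideanLin (A' i) v = _
      have : Matrix.toEuclideanLin (A i - A' i) = Matrix.toEuclideanLin (A i) - Matrix.toEuclideanLin (A' i) :=
        map_sub Matrix.toEuclideanLin _ _
      rw [this, LinearMap.sub_apply]
      abel
    rw [hrepr]
    calc ‖Matrix.toEuclideanLin (A i) v - Matrix.toEuclideanLin (A i - A' i) v‖
        ≤ ‖Matrix.toEuclideanLin (A i) v‖ + ‖Matrix.toEuclideanLin (A i - A' i) v‖ := norm_sub_le _ _
      _ ≤ ᾱ * ‖v‖ + 4 * ε * ‖v‖ := by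
          apply add_le_add
          · calc ‖Matrix.toEuclideanLin (A i) v‖ = ‖mLin (A i) v‖ := rfl
              _ ≤ ‖mLin (A i)‖ * ‖v‖ := (mLin _).le_opNorm _
              _ ≤ ᾱ * ‖v‖ := by gcongr; exact hnorm i
          · exact tEL_norm_le _ ε (hdiff i) v
      _ = (ᾱ + 4 * ε) * ‖v‖ := by ring
      _ ≤ β * ‖v‖ := by
          apply mul_le_mul_of_nonneg_right _ (norm_nonneg v)
          rw [hβ]; linarith [hε8]
  -- images are inside E'
  have hsub : ∀ i, (fun v => Matrix.toEuclideanLin (A' i) v + a' i) '' E' ⊆ E' := by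
    intro i v hv
    rw [hattr']
    exact mem_iUnion.mpr ⟨i, hv⟩
  -- fixed points of the perturbed maps
  obtain ⟨p', hp'E, hp'fix⟩ := fixed_in_attr (A' i1) (a' i1) (hA'β i1) hβ0 hβ1 hne' hc' (hsub i1)
  obtain ⟨q', hq'E, hq'fix⟩ := fixed_in_attr (A' iκ) (a' iκ) (hA'β iκ) hβ0 hβ1 hne' hc' (hsub iκ)
  have haa2 : ∀ i, ‖a i - a' i‖ ≤ 2 * ε := by
    intro i
    calc ‖a i - a' i‖ ≤ |(a i - a' i) 0| + |(a i - a' i) 1| := E2_norm_le _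
      _ ≤ ε + ε := add_le_add (le_of_lt (haa' i 0)) (le_of_lt (haa' i 1))
      _ = 2 * ε := by ring
  -- general decomposition
  have hgen : ∀ (B B' : Matrix (Fin 2) (Fin 2) ℝ) (b b' w w' : E2),
      (Matrix.toEuclideanLin B w + b) - (Matrix.toEuclideanLin B' w' + b')
        = Matrix.toEuclideanLin (B - B') w + (b - b') + Matrix.toEuclideanLin B' (w - w') := by
    intro B B' b b' w w'
    have h1 : Matrix.toEuclideanLin (B - B') = Matrix.toEuclideanLin B - Matrix.toEuclideanLin B' :=
      map_sub Matrix.toEuclideanLin _ _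
    rw [h1, LinearMap.sub_apply, map_sub]
    abel
  have hbound : ∀ (B B' : Matrix (Fin 2) (Fin 2) ℝ) (b b' w w' : E2),
      (∀ r s, |(B - B') r s| ≤ ε) → ‖b - b'‖ ≤ 2 * ε → ‖w‖ ≤ P → ‖mLin B'‖ ≤ β →
      ‖(Matrix.toEuclideanLin B w + b) - (Matrix.toEuclideanLin B' w' + b')‖
        ≤ 4 * ε * P + 2 * ε + β * ‖w - w'‖ := by
    intro B B' b b' w w' h1 h2 h3 h4
    rw [hgen]
    calc ‖Matrix.toEuclideanLin (B - B') w + (b - b') + Matrix.toEuclideanLin B' (w - w')‖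
        ≤ ‖Matrix.toEuclideanLin (B - B') w + (b - b')‖ + ‖Matrix.toEuclideanLin B' (w - w')‖ := norm_add_le _ _
      _ ≤ (‖Matrix.toEuclideanLin (B - B') w‖ + ‖b - b'‖) + ‖Matrix.toEuclideanLin B' (w - w')‖ := by
          gcongr; exact norm_add_le _ _
      _ ≤ (4 * ε * ‖w‖ + 2 * ε) + β * ‖w - w'‖ := by
          gcongr
          · exact tEL_norm_le _ ε h1 w
          · calc ‖Matrix.toEuclideanLin B' (w - w')‖ = ‖mLin B' (w - w')‖ := rfl
              _ ≤ ‖mLin B'‖ * ‖w - w'‖ := (mLin _).le_opNorm _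
              _ ≤ β * ‖w - w'‖ := by gcongr
      _ ≤ 4 * ε * P + 2 * ε + β * ‖w - w'‖ := by
          have : 4 * ε * ‖w‖ ≤ 4 * ε * P := by gcongr
          linarith
  -- distance between unperturbed and perturbed fixed points
  have hpp' : ‖p - p'‖ ≤ (4 * ε * P + 2 * ε) / (1 - β) := by
    have h0 : p - p' = (Matrix.toEuclideanLin (A i1) p + a i1) - (Matrix.toEuclideanLin (A' i1) p' + a' i1) := by
      rw [hpfix, hp'fix]
    have h1 : ‖p - p'‖ ≤ 4 * ε * P + 2 * ε + β * ‖p - p'‖ := by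
      conv_lhs => rw [h0]
      exact hbound _ _ _ _ _ _ (hdiff i1) (haa2 i1) hpP (hA'β i1)
    rw [le_div_iff₀ h1β]
    nlinarith
  have hqq' : ‖q - q'‖ ≤ (4 * ε * P + 2 * ε) / (1 - β) := by
    have h0 : q - q' = (Matrix.toEuclideanLin (A iκ) q + a iκ) - (Matrix.toEuclideanLin (A' iκ) q' + a' iκ) := by
      rw [hqfix, hq'fix]
    have h1 : ‖q - q'‖ ≤ 4 * ε * P + 2 * ε + β * ‖q - q'‖ := by
      conv_lhs => rw [h0]
      exact hbound _ _ _ _ _ _ (hdiff iκ) (haa2 iκ) hqP (hA'β iκ)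
    rw [le_div_iff₀ h1β]
    nlinarith
  -- perturbed endpoints
  set x' : Fin κ → E2 := fun i => Matrix.toEuclideanLin (A' i) p' + a' i with hx'def
  set y' : Fin κ → E2 := fun i => Matrix.toEuclideanLin (A' i) q' + a' i with hy'def
  have hx'mem : ∀ i, x' i ∈ E' := fun i => hsub i (mem_image_of_mem _ hp'E)
  have hy'mem : ∀ i, y' i ∈ E' := fun i => hsub i (mem_image_of_mem _ hq'E)
  have hxx' : ∀ i, ‖x i - x' i‖ ≤ K * ε := by
    intro i
    have h1 : ‖x i - x' i‖ ≤ 4 * ε * P + 2 * ε + β * ‖p - p'‖ := by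
      rw [hxf i]
      exact hbound _ _ _ _ _ _ (hdiff i) (haa2 i) hpP (hA'β i)
    have h2 : β * ‖p - p'‖ ≤ β * ((4 * ε * P + 2 * ε) / (1 - β)) :=
      mul_le_mul_of_nonneg_left hpp' hβ0
    have h4 : 4 * ε * P + 2 * ε + β * ((4 * ε * P + 2 * ε) / (1 - β))
        = (4 * ε * P + 2 * ε) / (1 - β) := by
      field_simp
      ring
    have h5 : (4 * ε * P + 2 * ε) / (1 - β) ≤ K * ε := by
      rw [div_le_iff₀ h1β, hK]
      have he1 : 0 ≤ ε * (1 - β) := mul_nonneg hε0.le h1β.le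
      have he2 : ((4 * P + 2) / (1 - β) + 1) * ε * (1 - β)
          = (4 * P + 2) * ε + ε * (1 - β) := by
        field_simp
      rw [he2]
      linarith
    calc ‖x i - x' i‖ ≤ 4 * ε * P + 2 * ε + β * ‖p - p'‖ := h1
      _ ≤ 4 * ε * P + 2 * ε + β * ((4 * ε * P + 2 * ε) / (1 - β)) := by linarith [h2]
      _ = (4 * ε * P + 2 * ε) / (1 - β) := h4
      _ ≤ K * ε := h5
  have hyy' : ∀ i, ‖y i - y' i‖ ≤ K * ε := by
    intro i
    have h1 : ‖y i - y' i‖ ≤ 4 * ε * P + 2 * ε + β * ‖q - q'‖ := by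
      rw [hyf i]
      exact hbound _ _ _ _ _ _ (hdiff i) (haa2 i) hqP (hA'β i)
    have h2 : β * ‖q - q'‖ ≤ β * ((4 * ε * P + 2 * ε) / (1 - β)) :=
      mul_le_mul_of_nonneg_left hqq' hβ0
    have h4 : 4 * ε * P + 2 * ε + β * ((4 * ε * P + 2 * ε) / (1 - β))
        = (4 * ε * P + 2 * ε) / (1 - β) := by
      field_simp
      ring
    have h5 : (4 * ε * P + 2 * ε) / (1 - β) ≤ K * ε := by
      rw [div_le_iff₀ h1β, hK]
      have he1 : 0 ≤ ε * (1 - β) := mul_nonneg hε0.le h1β.le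
      have he2 : ((4 * P + 2) / (1 - β) + 1) * ε * (1 - β)
          = (4 * P + 2) * ε + ε * (1 - β) := by
        field_simp
      rw [he2]
      linarith
    calc ‖y i - y' i‖ ≤ 4 * ε * P + 2 * ε + β * ‖q - q'‖ := h1
      _ ≤ 4 * ε * P + 2 * ε + β * ((4 * ε * P + 2 * ε) / (1 - β)) := by linarith [h2]
      _ = (4 * ε * P + 2 * ε) / (1 - β) := h4
      _ ≤ K * ε := h5
  -- size of the perturbation relative to the thresholds
  have hKεδ : K * ε < δmin := by
    have h1 : K * ε ≤ min δmin (c / 4) / 2 := by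
      have := mul_le_mul_of_nonneg_left hεK hK0.le
      calc K * ε ≤ K * (min δmin (c / 4) / (2 * K)) := this
        _ = min δmin (c / 4) / 2 := by field_simp
    calc K * ε ≤ min δmin (c / 4) / 2 := h1
      _ ≤ δmin / 2 := by gcongr; exact min_le_left _ _
      _ < δmin := by linarith
  have hKεc : K * ε ≤ c / 8 := by
    have h1 : K * ε ≤ min δmin (c / 4) / 2 := by
      have := mul_le_mul_of_nonneg_left hεK hK0.le
      calc K * ε ≤ K * (min δmin (c / 4) / (2 * K)) := this
        _ = min δmin (c / 4) / 2 := by field_simp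
    calc K * ε ≤ min δmin (c / 4) / 2 := h1
      _ ≤ (c / 4) / 2 := by gcongr; exact min_le_right _ _
      _ = c / 8 := by ring
  have hdists : ∀ i, dist (x' i) (x i) < δmin ∧ dist (y' i) (y i) < δmin := by
    intro i
    constructor
    · rw [dist_eq_norm, ← norm_neg]
      have : -(x' i - x i) = x i - x' i := by abel
      rw [this]
      exact lt_of_le_of_lt (hxx' i) hKεδ
    · rw [dist_eq_norm, ← norm_neg]
      have : -(y' i - y i) = y i - y' i := by abel
      rw [this]
      exact lt_of_le_of_lt (hyy' i) hKεδ
  -- the linking hypothesis for the perturbed system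
  have hlink : ∀ i j, 0 < M i j → ∃ z : E2,
      (∃ xx ∈ (fun v => Matrix.toEuclideanLin (A' i) v + a' i) '' E',
       ∃ yy ∈ (fun v => Matrix.toEuclideanLin (A' i) v + a' i) '' E', z ∈ segment ℝ xx yy) ∧
      (∃ xx ∈ (fun v => Matrix.toEuclideanLin (A' j) v + a' j) '' E',
       ∃ yy ∈ (fun v => Matrix.toEuclideanLin (A' j) v + a' j) '' E', z ∈ segment ℝ xx yy) := by
    intro i j hij
    obtain ⟨z, hz1, hz2⟩ := hδfP i j (hconds i j hij) (x' i) (y' i) (x' j) (y' j)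
      (lt_of_lt_of_le (hdists i).1 (hδminle i j))
      (lt_of_lt_of_le (hdists i).2 (hδminle i j))
      (lt_of_lt_of_le (hdists j).1 (hδminle i j))
      (lt_of_lt_of_le (hdists j).2 (hδminle i j))
    exact ⟨z, ⟨x' i, mem_image_of_mem _ hp'E, y' i, mem_image_of_mem _ hq'E, hz1⟩,
      ⟨x' j, mem_image_of_mem _ hp'E, y' j, mem_image_of_mem _ hq'E, hz2⟩⟩
  -- apply the main convexity result
  have hIcc := projection_eq_Icc A' a' hβ1 hβ0 hA'β hne' hc' hattr' M hMnn hlink hirr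
  -- identify the set in the statement with the image set
  have hset : {r : ℝ | ∃ v ∈ E', r = ⟪v, e⟫} = (fun v => ⟪v, e⟫) '' E' := by
    ext r
    simp only [mem_setOf_eq, mem_image]
    constructor
    · rintro ⟨v, hv, rfl⟩; exact ⟨v, hv, rfl⟩
    · rintro ⟨v, hv, rfl⟩; exact ⟨v, hv, rfl⟩
  constructor
  · rw [hset, hIcc e]
    exact convex_Icc _ _
  -- the length bound
  have hbddA : BddAbove {r : ℝ | ∃ v ∈ E', r = ⟪v, e⟫} := by
    rw [hset, hIcc e]; exact bddAbove_Icc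
  have hbddB : BddBelow {r : ℝ | ∃ v ∈ E', r = ⟪v, e⟫} := by
    rw [hset, hIcc e]; exact bddBelow_Icc
  have hmemS : ∀ w : E2, w ∈ E' → ⟪w, e⟫ ∈ {r : ℝ | ∃ v ∈ E', r = ⟪v, e⟫} :=
    fun w hw => ⟨w, hw, rfl⟩
  have hfinal : ∀ k : Fin κ, c ≤ |⟪y k - x k, e⟫| →
      c / 2 ≤ sSup {r : ℝ | ∃ v ∈ E', r = ⟪v, e⟫} - sInf {r : ℝ | ∃ v ∈ E', r = ⟪v, e⟫} := by
    intro k hk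
    have hdiffb : |⟪y' k - x' k, e⟫ - ⟪y k - x k, e⟫| ≤ c / 4 := by
      have h1 : ⟪y' k - x' k, e⟫ - ⟪y k - x k, e⟫ = ⟪(y' k - y k) - (x' k - x k), e⟫ := by
        rw [← inner_sub_left]
        congr 1
        abel
      rw [h1]
      calc |⟪(y' k - y k) - (x' k - x k), e⟫| ≤ ‖(y' k - y k) - (x' k - x k)‖ * ‖e‖ :=
            abs_real_inner_le_norm _ _
        _ = ‖(y' k - y k) - (x' k - x k)‖ := by rw [he, mul_one]
        _ ≤ ‖y' k - y k‖ + ‖x' k - x k‖ := norm_sub_le _ _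
        _ ≤ K * ε + K * ε := by
            apply add_le_add
            · rw [← norm_neg]
              have : -(y' k - y k) = y k - y' k := by abel
              rw [this]; exact hyy' k
            · rw [← norm_neg]
              have : -(x' k - x k) = x k - x' k := by abel
              rw [this]; exact hxx' k
        _ ≤ c / 8 + c / 8 := add_le_add hKεc hKεc
        _ = c / 4 := by ring
    have hlow : c / 2 ≤ |⟪y' k - x' k, e⟫| := by
      have := abs_sub_abs_le_abs_sub (⟪y k - x k, e⟫) (⟪y' k - x' k, e⟫)
      have h2 : |⟪y k - x k, e⟫ - ⟪y' k - x' k, e⟫| ≤ c / 4 := by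
        rw [abs_sub_comm]; exact hdiffb
      linarith
    have hr1 : ⟪x' k, e⟫ ∈ {r : ℝ | ∃ v ∈ E', r = ⟪v, e⟫} := hmemS _ (hx'mem k)
    have hr2 : ⟪y' k, e⟫ ∈ {r : ℝ | ∃ v ∈ E', r = ⟪v, e⟫} := hmemS _ (hy'mem k)
    have hs1 : ⟪x' k, e⟫ ≤ sSup {r : ℝ | ∃ v ∈ E', r = ⟪v, e⟫} := le_csSup hbddA hr1
    have hs2 : ⟪y' k, e⟫ ≤ sSup {r : ℝ | ∃ v ∈ E', r = ⟪v, e⟫} := le_csSup hbddA hr2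
    have hi1' : sInf {r : ℝ | ∃ v ∈ E', r = ⟪v, e⟫} ≤ ⟪x' k, e⟫ := csInf_le hbddB hr1
    have hi2' : sInf {r : ℝ | ∃ v ∈ E', r = ⟪v, e⟫} ≤ ⟪y' k, e⟫ := csInf_le hbddB hr2
    have hinn : ⟪y' k - x' k, e⟫ = ⟪y' k, e⟫ - ⟪x' k, e⟫ := inner_sub_left _ _ _
    rw [hinn] at hlow
    rcases abs_cases (⟪y' k, e⟫ - ⟪x' k, e⟫) with ⟨habs, _⟩ | ⟨habs, _⟩ <;> rw [habs] at hlow <;> linarith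
  rcases le_max_iff.mp (hcmax e he) with hcase | hcase
  · exact hfinal istar hcase
  · exact hfinal jstar hcase

end
end

section
/- Let A ∈ ℝ^{d×d} satisfy A(cl(𝒬_d ∪ −𝒬_d)) ⊂ 𝒬_d ∪ −𝒬_d, where 𝒬_d is the set of vectors in ℝ^d with all coordinates strictly positive and cl denotes closure. Then there exists a (d−1)-dimensional linear subspace H ⊂ ℝ^d such that for every w ∈ ℝ^d \ H there is n₀ ∈ ℕ with Aⁿw ∈ 𝒬_d ∪ −𝒬_d for all n ≥ n₀. -/
open Set Matrix Finset

noncomputable section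

/-- the open positive cone `𝒬_d` in `ℝ^d` -/
def posCone (d : ℕ) : Set (Fin d → ℝ) := {v | ∀ i, 0 < v i}

/-- the double cone `𝒬_d ∪ −𝒬_d` -/
def doubleCone (d : ℕ) : Set (Fin d → ℝ) := posCone d ∪ (-posCone d)

lemma neg_mem_doubleCone {d : ℕ} {x : Fin d → ℝ} (h : x ∈ doubleCone d) :
    -x ∈ doubleCone d := by
  rcases h with h | h
  · exact Or.inr (by simpa [Set.mem_neg] using h)
  · exact Or.inl (by simpa [Set.mem_neg] using h)

lemma mem_closure_posCone {d : ℕ} {x : Fin d → ℝ} (hx : ∀ i, 0 ≤ x i) :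
    x ∈ closure (posCone d) := by
  have h0 : Filter.Tendsto (fun n : ℕ => (1 / (n + 1 : ℝ))) Filter.atTop (nhds 0) :=
    tendsto_one_div_add_atTop_nhds_zero_nat
  have hc : Continuous (fun c : ℝ => x + c • (fun _ => 1 : Fin d → ℝ)) := by
    continuity
  have htend : Filter.Tendsto (fun n : ℕ => x + (1 / (n + 1 : ℝ)) • (fun _ => 1 : Fin d → ℝ))
      Filter.atTop (nhds x) := by
    have := (hc.tendsto 0).comp h0
    simpa [Function.comp_def] using this
  refine mem_closure_of_tendsto htend (Filter.Eventually.of_forall fun n => ?_)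
  intro i
  have h1 : (0:ℝ) < 1 / (n + 1 : ℝ) := by positivity
  simpa using add_pos_of_nonneg_of_pos (hx i) h1

lemma mulVec_pos' {d : ℕ} {B : Matrix (Fin d) (Fin d) ℝ} (hB : ∀ i j, 0 < B i j)
    {x : Fin d → ℝ} (hx : ∀ i, 0 ≤ x i) (hx0 : x ≠ 0) : ∀ i, 0 < (B *ᵥ x) i := by
  intro i
  obtain ⟨j, hj⟩ : ∃ j, x j ≠ 0 := by
    by_contra h; push_neg at h; exact hx0 (funext h)
  have hj' : 0 < x j := lt_of_le_of_ne (hx j) (Ne.symm hj)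
  have h1 : B i j * x j ≤ ∑ k, B i k * x k :=
    Finset.single_le_sum (fun k _ => mul_nonneg (hB i k).le (hx k)) (mem_univ j)
  exact lt_of_lt_of_le (mul_pos (hB i j) hj') h1

lemma perron {d : ℕ} (hd : 0 < d) (B : Matrix (Fin d) (Fin d) ℝ) (hB : ∀ i j, 0 < B i j) :
    ∃ (lam : ℝ) (v : Fin d → ℝ), 0 < lam ∧ (∀ i, 0 < v i) ∧ B *ᵥ v = lam • v := by
  haveI : Nonempty (Fin d) := Fin.pos_iff_nonempty.mp hd
  have hne : (Finset.univ : Finset (Fin d)).Nonempty := univ_nonempty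
  set a : ℝ := univ.inf' hne (fun i => univ.inf' hne (fun j => B i j)) with ha_def
  have ha : 0 < a := by
    rw [Finset.lt_inf'_iff]
    intro i _
    rw [Finset.lt_inf'_iff]
    exact fun j _ => hB i j
  have hale : ∀ i j, a ≤ B i j := fun i j =>
    le_trans (Finset.inf'_le _ (mem_univ i)) (Finset.inf'_le _ (mem_univ j))
  set amax : ℝ := univ.sup' hne (fun i => univ.sup' hne (fun j => B i j)) with hamax_def
  have hamaxle : ∀ i j, B i j ≤ amax := fun i j =>
    le_trans (Finset.le_sup' (B i) (mem_univ j))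
      (Finset.le_sup' (fun i => univ.sup' hne (fun j => B i j)) (mem_univ i))
  have haamax : a ≤ amax := le_trans (hale (Classical.arbitrary _) (Classical.arbitrary _))
    (hamaxle _ _)
  -- the simplex
  set Δ : Set (Fin d → ℝ) := {x | (∀ i, 0 ≤ x i) ∧ ∑ i, x i = 1} with hΔ_def
  have hΔsub : ∀ x ∈ Δ, ∀ i, x i ≤ 1 := by
    intro x hx i
    calc x i ≤ ∑ j, x j := Finset.single_le_sum (fun j _ => hx.1 j) (mem_univ i)
    _ = 1 := hx.2
  have hΔclosed : IsClosed Δ := by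
    have h1 : IsClosed {x : Fin d → ℝ | ∀ i, 0 ≤ x i} := by
      have : {x : Fin d → ℝ | ∀ i, 0 ≤ x i} = ⋂ i, {x | 0 ≤ x i} :=
        Set.ext fun x => by simp
      rw [this]
      exact isClosed_iInter fun i => isClosed_le continuous_const (continuous_apply i)
    have h2 : IsClosed {x : Fin d → ℝ | ∑ i, x i = 1} :=
      isClosed_eq (continuous_finset_sum _ fun i _ => continuous_apply i) continuous_const
    exact h1.inter h2
  have hΔcomp : IsCompact Δ := by
    refine IsCompact.of_isClosed_subset
      (isCompact_univ_pi fun _ : Fin d => isCompact_Icc (a := (0:ℝ)) (b := 1)) hΔclosed ?_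
    intro x hx
    simp only [Set.mem_univ_pi]
    exact fun i => ⟨hx.1 i, hΔsub x hx i⟩
  have hΔne : Δ.Nonempty := by
    refine ⟨fun _ => 1 / d, fun i => by positivity, ?_⟩
    simp
    field_simp
  -- B *ᵥ x bounded below on Δ
  have hBlow : ∀ x ∈ Δ, ∀ i, a ≤ (B *ᵥ x) i := by
    intro x hx i
    have : ∀ j, a * x j ≤ B i j * x j := fun j =>
      mul_le_mul_of_nonneg_right (hale i j) (hx.1 j)
    calc a = a * ∑ j, x j := by rw [hx.2, mul_one]
    _ = ∑ j, a * x j := by rw [Finset.mul_sum]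
    _ ≤ ∑ j, B i j * x j := Finset.sum_le_sum fun j _ => this j
    _ = (B *ᵥ x) i := rfl
  have hBcont : Continuous (fun x : Fin d → ℝ => B *ᵥ x) := by
    have := (B.mulVecLin : (Fin d → ℝ) →ₗ[ℝ] (Fin d → ℝ)).continuous_of_finiteDimensional
    exact this
  set g : (Fin d → ℝ) → (Fin d → ℝ) := fun x => (∑ i, (B *ᵥ x) i)⁻¹ • (B *ᵥ x) with hg_def
  have hsum_pos : ∀ x ∈ Δ, 0 < ∑ i, (B *ᵥ x) i := by
    intro x hx
    exact Finset.sum_pos (fun i _ => lt_of_lt_of_le ha (hBlow x hx i)) hne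
  have hgcont : ContinuousOn g Δ := by
    refine ContinuousOn.smul (f := fun x : Fin d → ℝ => (∑ i, (B *ᵥ x) i)⁻¹) ?_ hBcont.continuousOn
    refine ContinuousOn.inv₀ ((continuous_finset_sum _ fun i _ =>
      (continuous_apply i).comp hBcont).continuousOn) ?_
    exact fun x hx => (hsum_pos x hx).ne'
  set C : Set (Fin d → ℝ) := g '' Δ with hC_def
  have hCcomp : IsCompact C := hΔcomp.image_of_continuousOn hgcont
  have hCpos : ∀ y ∈ C, ∀ i, 0 < y i := by
    rintro y ⟨x, hx, rfl⟩ i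
    exact mul_pos (inv_pos.mpr (hsum_pos x hx)) (lt_of_lt_of_le ha (hBlow x hx i))
  have hCsub : C ⊆ Δ := by
    rintro y ⟨x, hx, rfl⟩
    refine ⟨fun i => (mul_pos (inv_pos.mpr (hsum_pos x hx))
      (lt_of_lt_of_le ha (hBlow x hx i))).le, ?_⟩
    show ∑ i, (∑ j, (B *ᵥ x) j)⁻¹ * (B *ᵥ x) i = 1
    rw [← Finset.mul_sum]
    exact inv_mul_cancel₀ (hsum_pos x hx).ne'
  have hCne : C.Nonempty := hΔne.image g
  set T : ℝ := d * amax + 1 with hT_def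
  -- feasibility bound
  have hfeas : ∀ x ∈ Δ, ∀ t : ℝ, 0 ≤ t → (∀ i, t * x i ≤ (B *ᵥ x) i) → t ≤ d * amax := by
    intro x hx t ht hcon
    obtain ⟨i, hi⟩ : ∃ i, (1:ℝ)/d ≤ x i := by
      by_contra h
      push_neg at h
      have : (1:ℝ) < 1 := by
        calc (1:ℝ) = ∑ j, x j := hx.2.symm
        _ < ∑ _j : Fin d, (1:ℝ)/d := Finset.sum_lt_sum_of_nonempty hne fun j _ => h j
        _ = d * (1/d) := by rw [Finset.sum_const, card_univ, Fintype.card_fin]; ring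
        _ = 1 := by field_simp
      exact absurd this (lt_irrefl 1)
    have h1 : t * (1/d) ≤ t * x i := mul_le_mul_of_nonneg_left hi ht
    have h2 : (B *ᵥ x) i ≤ amax := by
      calc (B *ᵥ x) i = ∑ j, B i j * x j := rfl
      _ ≤ ∑ j, amax * x j := Finset.sum_le_sum fun j _ =>
          mul_le_mul_of_nonneg_right (hamaxle i j) (hx.1 j)
      _ = amax * ∑ j, x j := by rw [Finset.mul_sum]
      _ = amax := by rw [hx.2, mul_one]
    have hd' : (0:ℝ) < d := by exact_mod_cast hd
    have := le_trans h1 (le_trans (hcon i) h2)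
    calc t = (t * (1/d)) * d := by field_simp
    _ ≤ amax * d := mul_le_mul_of_nonneg_right this hd'.le
    _ = d * amax := by ring
  set S : Set ((Fin d → ℝ) × ℝ) :=
    {p | p.1 ∈ C} ∩ {p | p.2 ∈ Set.Icc 0 T} ∩ ⋂ i, {p | p.2 * p.1 i ≤ (B *ᵥ p.1) i} with hS_def
  have hSclosed : IsClosed S := by
    refine IsClosed.inter (IsClosed.inter ?_ ?_) (isClosed_iInter fun i => ?_)
    · exact hCcomp.isClosed.preimage continuous_fst
    · exact isClosed_Icc.preimage continuous_snd
    · exact isClosed_le (continuous_snd.mul ((continuous_apply i).comp continuous_fst))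
        (((continuous_apply i).comp hBcont).comp continuous_fst)
  have hScomp : IsCompact S := IsCompact.of_isClosed_subset (hCcomp.prod isCompact_Icc)
    hSclosed (fun p hp => ⟨hp.1.1, hp.1.2⟩)
  have haT : a ≤ T := by
    have hd1 : (1:ℝ) ≤ d := by exact_mod_cast hd
    nlinarith [lt_of_lt_of_le ha haamax]
  have hfeasS : ∀ y ∈ C, (y, a) ∈ S := by
    intro y hy
    refine ⟨⟨hy, ha.le, haT⟩, ?_⟩
    simp only [Set.mem_iInter]
    intro i
    show a * y i ≤ (B *ᵥ y) i
    calc a * y i ≤ a * 1 := mul_le_mul_of_nonneg_left (hΔsub y (hCsub hy) i) ha.le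
    _ = a := mul_one a
    _ ≤ (B *ᵥ y) i := hBlow y (hCsub hy) i
  obtain ⟨y0, hy0⟩ := hCne
  have hSne : S.Nonempty := ⟨(y0, a), hfeasS y0 hy0⟩
  obtain ⟨⟨v, lam⟩, hvS, hmax⟩ := hScomp.exists_isMaxOn hSne continuous_snd.continuousOn
  have hvC : v ∈ C := hvS.1.1
  have hcon : ∀ i, lam * v i ≤ (B *ᵥ v) i := by
    have := hvS.2
    simp only [Set.mem_iInter] at this
    exact this
  have hlam : a ≤ lam := hmax (hfeasS v hvC)
  have hlampos : 0 < lam := lt_of_lt_of_le ha hlam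
  refine ⟨lam, v, hlampos, hCpos v hvC, ?_⟩
  by_contra hne'
  set y : Fin d → ℝ := B *ᵥ v - lam • v with hy_def
  have hy0' : y ≠ 0 := fun h => hne' (by rwa [sub_eq_zero] at h)
  have hynn : ∀ i, 0 ≤ y i := fun i => by
    simpa [hy_def, sub_nonneg] using hcon i
  have hBy := mulVec_pos' hB hynn hy0'
  have hstrict : ∀ i, lam * (B *ᵥ v) i < (B *ᵥ (B *ᵥ v)) i := by
    intro i
    have := hBy i
    rw [hy_def, mulVec_sub, mulVec_smul] at this
    have h2 : 0 < (B *ᵥ (B *ᵥ v)) i - lam * (B *ᵥ v) i := by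
      simpa [Pi.sub_apply, Pi.smul_apply, smul_eq_mul] using this
    linarith
  set s : ℝ := ∑ i, (B *ᵥ v) i with hs_def
  have hs : 0 < s := hsum_pos v (hCsub hvC)
  set v' : Fin d → ℝ := g v with hv'_def
  have hv'C : v' ∈ C := ⟨v, hCsub hvC, rfl⟩
  have hv'strict : ∀ i, lam * v' i < (B *ᵥ v') i := by
    intro i
    have h1 : (B *ᵥ v') i = s⁻¹ * (B *ᵥ (B *ᵥ v)) i := by
      rw [hv'_def]
      show (B *ᵥ (s⁻¹ • (B *ᵥ v))) i = _
      rw [mulVec_smul]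
      simp [smul_eq_mul]
    have h2 : v' i = s⁻¹ * (B *ᵥ v) i := rfl
    rw [h1, h2]
    have := hstrict i
    have hsinv : 0 < s⁻¹ := inv_pos.mpr hs
    calc lam * (s⁻¹ * (B *ᵥ v) i) = s⁻¹ * (lam * (B *ᵥ v) i) := by ring
    _ < s⁻¹ * (B *ᵥ (B *ᵥ v)) i := by exact mul_lt_mul_of_pos_left (hstrict i) hsinv
  set ε : ℝ := univ.inf' hne (fun i => (B *ᵥ v') i - lam * v' i) with hε_def
  have hε : 0 < ε := by
    rw [hε_def, Finset.lt_inf'_iff]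
    intro i _
    linarith [hv'strict i]
  have hεle : ∀ i, ε ≤ (B *ᵥ v') i - lam * v' i := fun i =>
    Finset.inf'_le _ (mem_univ i)
  have ht'con : ∀ i, (lam + ε) * v' i ≤ (B *ᵥ v') i := by
    intro i
    have h1 : v' i ≤ 1 := hΔsub v' (hCsub hv'C) i
    have h2 : ε * v' i ≤ ε * 1 := mul_le_mul_of_nonneg_left h1 hε.le
    have := hεle i
    nlinarith
  have ht'T : lam + ε ≤ T := by
    have := hfeas v' (hCsub hv'C) (lam + ε) (by linarith) ht'con
    rw [hT_def]
    linarith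
  have hmem : (v', lam + ε) ∈ S := by
    refine ⟨⟨hv'C, ?_, ht'T⟩, ?_⟩
    · show (0:ℝ) ≤ lam + ε
      linarith
    · simp only [Set.mem_iInter]
      exact ht'con
  have hfin : lam + ε ≤ lam := hmax hmem
  linarith

lemma core {d : ℕ} (hd : 0 < d) (B : Matrix (Fin d) (Fin d) ℝ) (hB : ∀ i j, 0 < B i j) :
    ∃ H : Submodule ℝ (Fin d → ℝ), Module.finrank ℝ H = d - 1 ∧
      ∀ w : Fin d → ℝ, w ∉ H → ∃ n₀ : ℕ, ∀ n ≥ n₀, (B ^ n).mulVec w ∈ doubleCone d := by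
  haveI : Nonempty (Fin d) := Fin.pos_iff_nonempty.mp hd
  have hne : (Finset.univ : Finset (Fin d)).Nonempty := univ_nonempty
  obtain ⟨lam, v, hlam, hv, hveq⟩ := perron hd B hB
  obtain ⟨mu, φ, hmu, hφ, hφeq⟩ := perron hd Bᵀ (fun i j => hB j i)
  have hφv : 0 < φ ⬝ᵥ v := Finset.sum_pos (fun i _ => mul_pos (hφ i) (hv i)) hne
  have hvecMul : φ ᵥ* B = mu • φ := by rw [← mulVec_transpose, hφeq]
  have hmueq : mu = lam := by
    have h1 : φ ⬝ᵥ (B *ᵥ v) = lam * (φ ⬝ᵥ v) := by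
      rw [hveq, dotProduct_smul, smul_eq_mul]
    have h2 : φ ⬝ᵥ (B *ᵥ v) = mu * (φ ⬝ᵥ v) := by
      rw [dotProduct_mulVec, hvecMul, smul_dotProduct, smul_eq_mul]
    exact mul_right_cancel₀ hφv.ne' (h2.symm.trans h1)
  -- the linear functional
  set f : (Fin d → ℝ) →ₗ[ℝ] ℝ :=
    { toFun := fun w => φ ⬝ᵥ w
      map_add' := fun x y => dotProduct_add φ x y
      map_smul' := fun c x => by simp [dotProduct_smul, smul_eq_mul] } with hf_def
  have hf_apply : ∀ w, f w = φ ⬝ᵥ w := fun w => rfl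
  refine ⟨LinearMap.ker f, ?_, ?_⟩
  · have hrange : LinearMap.range f = ⊤ := by
      rw [LinearMap.range_eq_top]
      intro c
      refine ⟨(c / (φ ⬝ᵥ v)) • v, ?_⟩
      rw [hf_apply, dotProduct_smul, smul_eq_mul]
      field_simp
    have h := f.finrank_range_add_finrank_ker
    rw [hrange, finrank_top, Module.finrank_self, Module.finrank_fin_fun] at h
    omega
  -- constants
  set a : ℝ := univ.inf' hne (fun i => univ.inf' hne (fun j => B i j)) with ha_def
  have ha : 0 < a := by
    rw [ha_def, Finset.lt_inf'_iff]
    intro i _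
    rw [Finset.lt_inf'_iff]
    exact fun j _ => hB i j
  have hale : ∀ i j, a ≤ B i j := fun i j =>
    le_trans (Finset.inf'_le _ (mem_univ i)) (Finset.inf'_le _ (mem_univ j))
  set V : ℝ := univ.sup' hne v with hV_def
  have hvV : ∀ i, v i ≤ V := fun i => Finset.le_sup' v (mem_univ i)
  have hV : 0 < V := lt_of_lt_of_le (hv (Classical.arbitrary _)) (hvV _)
  set σ : ℝ := ∑ i, v i with hσ_def
  have hσ : 0 < σ := Finset.sum_pos (fun i _ => hv i) hne
  -- max/min ratios
  set m : (Fin d → ℝ) → ℝ := fun x => univ.inf' hne (fun i => x i / v i) with hm_def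
  set M : (Fin d → ℝ) → ℝ := fun x => univ.sup' hne (fun i => x i / v i) with hM_def
  have hmle : ∀ x i, m x * v i ≤ x i := by
    intro x i
    have h1 : m x ≤ x i / v i := Finset.inf'_le _ (mem_univ i)
    exact (le_div_iff₀ (hv i)).mp h1
  have hMle : ∀ x i, x i ≤ M x * v i := by
    intro x i
    have h1 : x i / v i ≤ M x := Finset.le_sup' (fun i => x i / v i) (mem_univ i)
    exact (div_le_iff₀ (hv i)).mp h1
  have hmM : ∀ x, m x ≤ M x := by
    intro x
    obtain ⟨i⟩ := ‹Nonempty (Fin d)›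
    exact le_trans (Finset.inf'_le (fun i => x i / v i) (mem_univ i))
      (Finset.le_sup' (fun i => x i / v i) (mem_univ i))
  set κ : ℝ := lam - a * σ / V with hκ_def
  have hκlt : κ < lam := by
    have : 0 < a * σ / V := by positivity
    rw [hκ_def]; linarith
  -- contraction step
  have step : ∀ x : Fin d → ℝ, M (B *ᵥ x) - m (B *ᵥ x) ≤ κ * (M x - m x) := by
    intro x
    set s1 : ℝ := ∑ j, (x j - m x * v j) with hs1_def
    set s2 : ℝ := ∑ j, (M x * v j - x j) with hs2_def
    have hs1 : 0 ≤ s1 := Finset.sum_nonneg fun j _ => by linarith [hmle x j]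
    have hs2 : 0 ≤ s2 := Finset.sum_nonneg fun j _ => by linarith [hMle x j]
    have hsum : s1 + s2 = (M x - m x) * σ := by
      rw [hs1_def, hs2_def, ← Finset.sum_add_distrib, hσ_def, Finset.mul_sum]
      exact Finset.sum_congr rfl fun j _ => by ring
    have lower : lam * m x + a * s1 / V ≤ m (B *ᵥ x) := by
      refine Finset.le_inf' hne _ fun i _ => ?_
      have h1 : (B *ᵥ (x - m x • v)) i = (B *ᵥ x) i - m x * lam * v i := by
        rw [mulVec_sub, mulVec_smul, hveq]
        show (B *ᵥ x) i - m x * (lam * v i) = _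
        ring
      have h2 : a * s1 ≤ (B *ᵥ (x - m x • v)) i := by
        show a * s1 ≤ ∑ j, B i j * (x - m x • v) j
        rw [hs1_def, Finset.mul_sum]
        refine Finset.sum_le_sum fun j _ => ?_
        have hnn : 0 ≤ x j - m x * v j := by linarith [hmle x j]
        have : (x - m x • v) j = x j - m x * v j := by simp [smul_eq_mul]
        rw [this]
        exact mul_le_mul_of_nonneg_right (hale i j) hnn
      have h3 : lam * m x * v i + a * s1 ≤ (B *ᵥ x) i := by
        rw [h1] at h2; linarith
      have h4 : a * s1 / V ≤ a * s1 / v i :=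
        div_le_div_of_nonneg_left (mul_nonneg ha.le hs1) (hv i) (hvV i)
      have h5 : lam * m x + a * s1 / v i ≤ (B *ᵥ x) i / v i := by
        rw [le_div_iff₀ (hv i)]
        calc (lam * m x + a * s1 / v i) * v i = lam * m x * v i + a * s1 / v i * v i := by
              ring
        _ = lam * m x * v i + a * s1 := by
              rw [div_mul_cancel₀ _ (hv i).ne']
        _ ≤ (B *ᵥ x) i := h3
      linarith
    have upper : M (B *ᵥ x) ≤ lam * M x - a * s2 / V := by
      refine Finset.sup'_le hne _ fun i _ => ?_
      have h1 : (B *ᵥ (M x • v - x)) i = M x * lam * v i - (B *ᵥ x) i := by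
        rw [mulVec_sub, mulVec_smul, hveq]
        show M x * (lam * v i) - (B *ᵥ x) i = _
        ring
      have h2 : a * s2 ≤ (B *ᵥ (M x • v - x)) i := by
        show a * s2 ≤ ∑ j, B i j * (M x • v - x) j
        rw [hs2_def, Finset.mul_sum]
        refine Finset.sum_le_sum fun j _ => ?_
        have hnn : 0 ≤ M x * v j - x j := by linarith [hMle x j]
        have : (M x • v - x) j = M x * v j - x j := by simp [smul_eq_mul]
        rw [this]
        exact mul_le_mul_of_nonneg_right (hale i j) hnn
      have h3 : (B *ᵥ x) i ≤ lam * M x * v i - a * s2 := by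
        rw [h1] at h2; linarith
      have h4 : a * s2 / V ≤ a * s2 / v i :=
        div_le_div_of_nonneg_left (mul_nonneg ha.le hs2) (hv i) (hvV i)
      have h5 : (B *ᵥ x) i / v i ≤ lam * M x - a * s2 / v i := by
        rw [div_le_iff₀ (hv i)]
        calc (B *ᵥ x) i ≤ lam * M x * v i - a * s2 := h3
        _ = (lam * M x - a * s2 / v i) * v i := by
              have hcc : a * s2 / v i * v i = a * s2 := div_mul_cancel₀ _ (hv i).ne'
              linarith [hcc]
      linarith
    have e1 : lam * M x - a * s2 / V - (lam * m x + a * s1 / V)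
        = lam * (M x - m x) - a * (s1 + s2) / V := by ring
    rw [hsum] at e1
    have e2 : lam * (M x - m x) - a * ((M x - m x) * σ) / V = κ * (M x - m x) := by
      rw [hκ_def]; ring
    calc M (B *ᵥ x) - m (B *ᵥ x)
        ≤ lam * M x - a * s2 / V - (lam * m x + a * s1 / V) := by linarith [lower, upper]
    _ = κ * (M x - m x) := e1.trans e2
  -- θ
  set θ : ℝ := max (κ / lam) 0 with hθ_def
  have hθ0 : 0 ≤ θ := le_max_right _ _
  have hθ1 : θ < 1 := by
    rw [hθ_def, max_lt_iff]
    constructor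
    · rw [div_lt_one hlam]; exact hκlt
    · norm_num
  have hκθ : κ ≤ θ * lam := by
    have h1 : κ / lam ≤ θ := le_max_left _ _
    calc κ = κ / lam * lam := by field_simp
    _ ≤ θ * lam := mul_le_mul_of_nonneg_right h1 hlam.le
  -- the key positivity statement
  have key : ∀ w : Fin d → ℝ, 0 < φ ⬝ᵥ w →
      ∃ n₀ : ℕ, ∀ n ≥ n₀, (B ^ n).mulVec w ∈ posCone d := by
    intro w hw
    set y : ℕ → (Fin d → ℝ) := fun n => (B ^ n).mulVec w with hy_def
    have hy0 : y 0 = w := by simp [hy_def]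
    have hysucc : ∀ n, y (n + 1) = B *ᵥ y n := by
      intro n
      rw [hy_def]
      show (B ^ (n+1)) *ᵥ w = B *ᵥ ((B ^ n) *ᵥ w)
      rw [pow_succ', mulVec_mulVec]
    set D0 : ℝ := M w - m w with hD0_def
    have hD0 : 0 ≤ D0 := by rw [hD0_def]; linarith [hmM w]
    have hdiff : ∀ n, M (y n) - m (y n) ≤ (θ * lam) ^ n * D0 := by
      intro n
      induction n with
      | zero => simp [hy0, hD0_def]
      | succ n ih =>
        rw [hysucc n, pow_succ]
        calc M (B *ᵥ y n) - m (B *ᵥ y n) ≤ κ * (M (y n) - m (y n)) := step (y n)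
        _ ≤ (θ * lam) * (M (y n) - m (y n)) :=
            mul_le_mul_of_nonneg_right hκθ (by linarith [hmM (y n)])
        _ ≤ (θ * lam) * ((θ * lam) ^ n * D0) :=
            mul_le_mul_of_nonneg_left ih (mul_nonneg hθ0 hlam.le)
        _ = (θ * lam) ^ n * (θ * lam) * D0 := by ring
    have hφy : ∀ n, φ ⬝ᵥ y n = lam ^ n * (φ ⬝ᵥ w) := by
      intro n
      induction n with
      | zero => simp [hy0]
      | succ n ih =>
        rw [hysucc n, dotProduct_mulVec, hvecMul, smul_dotProduct, smul_eq_mul, ih,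
          hmueq, pow_succ]
        ring
    set c : ℝ := (φ ⬝ᵥ w) / (φ ⬝ᵥ v) with hc_def
    have hc : 0 < c := div_pos hw hφv
    have hMc : ∀ n, lam ^ n * c ≤ M (y n) := by
      intro n
      have h1 : φ ⬝ᵥ y n ≤ M (y n) * (φ ⬝ᵥ v) := by
        calc φ ⬝ᵥ y n = ∑ i, φ i * y n i := rfl
        _ ≤ ∑ i, φ i * (M (y n) * v i) := Finset.sum_le_sum fun i _ =>
            mul_le_mul_of_nonneg_left (hMle (y n) i) (hφ i).le
        _ = M (y n) * ∑ i, φ i * v i := by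
              rw [Finset.mul_sum]
              exact Finset.sum_congr rfl fun i _ => by ring
        _ = M (y n) * (φ ⬝ᵥ v) := rfl
      rw [hφy n] at h1
      rw [hc_def, ← mul_div_assoc, div_le_iff₀ hφv]
      linarith
    obtain ⟨n₀, hn₀⟩ := exists_pow_lt_of_lt_one
      (div_pos hc (by linarith : (0:ℝ) < D0 + 1)) hθ1
    refine ⟨n₀, fun n hn => ?_⟩
    have hθn : θ ^ n ≤ θ ^ n₀ := pow_le_pow_of_le_one hθ0 hθ1.le hn
    have hθD : θ ^ n * D0 < c := by
      have h1 : θ ^ n * D0 ≤ θ ^ n₀ * D0 := mul_le_mul_of_nonneg_right hθn hD0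
      have h2 : θ ^ n₀ * D0 ≤ θ ^ n₀ * (D0 + 1) :=
        mul_le_mul_of_nonneg_left (by linarith) (pow_nonneg hθ0 n₀)
      have h3 : θ ^ n₀ * (D0 + 1) < c / (D0 + 1) * (D0 + 1) :=
        mul_lt_mul_of_pos_right hn₀ (by linarith)
      have h4 : c / (D0 + 1) * (D0 + 1) = c :=
        div_mul_cancel₀ _ (ne_of_gt (by linarith : (0:ℝ) < D0 + 1))
      calc θ ^ n * D0 ≤ θ ^ n₀ * D0 := h1
      _ ≤ θ ^ n₀ * (D0 + 1) := h2
      _ < c / (D0 + 1) * (D0 + 1) := h3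
      _ = c := h4
    have hmpos : 0 < m (y n) := by
      have h1 : M (y n) - m (y n) ≤ (θ * lam) ^ n * D0 := hdiff n
      rw [mul_pow] at h1
      have h3 : lam ^ n * c ≤ M (y n) := hMc n
      have hlamn : 0 < lam ^ n := pow_pos hlam n
      have e : θ ^ n * lam ^ n * D0 = lam ^ n * (θ ^ n * D0) := by ring
      have h4 : 0 < lam ^ n * (c - θ ^ n * D0) := mul_pos hlamn (by linarith [hθD])
      have e2 : lam ^ n * (c - θ ^ n * D0) = lam ^ n * c - lam ^ n * (θ ^ n * D0) := by ring
      linarith [h1, h3, e, h4, e2]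
    intro i
    have := hmle (y n) i
    have : 0 < m (y n) * v i := mul_pos hmpos (hv i)
    show 0 < y n i
    linarith [hmle (y n) i]
  -- conclude
  intro w hw
  have hwne : φ ⬝ᵥ w ≠ 0 := by
    intro h
    exact hw (by rwa [LinearMap.mem_ker, hf_apply])
  rcases lt_or_gt_of_ne hwne with hneg | hpos
  · obtain ⟨n₀, hn₀⟩ := key (-w) (by rw [dotProduct_neg]; linarith)
    refine ⟨n₀, fun n hn => ?_⟩
    have h1 := hn₀ n hn
    rw [mulVec_neg] at h1
    right
    rw [Set.mem_neg]
    exact h1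
  · obtain ⟨n₀, hn₀⟩ := key w hpos
    exact ⟨n₀, fun n hn => Or.inl (hn₀ n hn)⟩

/-- Lemma A.2: if a matrix maps the closure of the double cone `𝒬_d ∪ −𝒬_d` (minus the
origin) into the open double cone, then there is a hyperplane `H` such that every vector
off `H` is eventually mapped into the double cone by all large powers of `A`. -/
theorem eventually_in_cone (d : ℕ) (A : Matrix (Fin d) (Fin d) ℝ)
    (hA : ∀ x ∈ closure (doubleCone d), x ≠ 0 → A.mulVec x ∈ doubleCone d) :
    ∃ H : Submodule ℝ (Fin d → ℝ), Module.finrank ℝ H = d - 1 ∧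
      ∀ w : Fin d → ℝ, w ∉ H → ∃ n₀ : ℕ, ∀ n ≥ n₀, (A ^ n).mulVec w ∈ doubleCone d := by
  by_cases hd : 0 < d
  swap
  · -- degenerate case d = 0
    have hd0 : d = 0 := by omega
    refine ⟨⊥, ?_, ?_⟩
    · rw [finrank_bot, hd0]
    · intro w _
      exact ⟨0, fun n _ => Or.inl (fun i => absurd i.2 (by omega))⟩
  -- d ≥ 1
  haveI : Nonempty (Fin d) := Fin.pos_iff_nonempty.mp hd
  have hne : (Finset.univ : Finset (Fin d)).Nonempty := univ_nonempty
  have hApos : ∀ x : Fin d → ℝ, (∀ i, 0 ≤ x i) → x ≠ 0 → A *ᵥ x ∈ doubleCone d := by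
    intro x hx hx0
    exact hA x (closure_mono Set.subset_union_left (mem_closure_posCone hx)) hx0
  have hsum0 : ∀ z ∈ doubleCone d, (∑ i, z i) ≠ 0 := by
    rintro z (hz | hz)
    · exact (Finset.sum_pos (fun i _ => hz i) hne).ne'
    · rw [Set.mem_neg] at hz
      have : 0 < ∑ i, (-z) i := Finset.sum_pos (fun i _ => hz i) hne
      have h2 : ∑ i, (-z) i = -∑ i, z i := by simp
      rw [h2] at this
      intro h
      rw [h] at this
      simp at this
  have hsingle_nn : ∀ j : Fin d, ∀ i, (0:ℝ) ≤ (Pi.single j (1:ℝ) : Fin d → ℝ) i := by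
    intro j i
    rcases eq_or_ne i j with rfl | h
    · simp
    · simp [Pi.single_apply, h]
  have hsingle_ne : ∀ j : Fin d, (Pi.single j (1:ℝ) : Fin d → ℝ) ≠ 0 := by
    intro j h
    have := congrFun h j
    simp at this
  have hcolmem : ∀ j : Fin d, A *ᵥ Pi.single j 1 ∈ doubleCone d := fun j =>
    hApos _ (hsingle_nn j) (hsingle_ne j)
  have hcol : ∀ i j : Fin d, (A *ᵥ Pi.single j (1:ℝ)) i = A i j := by
    intro i j
    simp [Matrix.mulVec_single]
  have hPN : ∀ j : Fin d, (∀ i, 0 < A i j) ∨ (∀ i, A i j < 0) := by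
    intro j
    rcases hcolmem j with h | h
    · left; intro i; have := h i; rwa [hcol i j] at this
    · right; intro i
      rw [Set.mem_neg] at h
      have := h i
      rw [Pi.neg_apply, hcol i j] at this
      linarith
  have hcontra : ∀ j k : Fin d, (∀ i, 0 < A i j) → (∀ i, A i k < 0) → False := by
    intro j k hPj hNk
    have hjk : j ≠ k := by
      intro h
      subst h
      exact absurd (hPj (Classical.arbitrary _)) (not_lt.mpr (hNk _).le)
    set sj : ℝ := ∑ i, A i j with hsj_def
    set sk : ℝ := ∑ i, A i k with hsk_def
    have hsj : 0 < sj := Finset.sum_pos (fun i _ => hPj i) hne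
    have hsk : sk < 0 := by
      have : 0 < ∑ i, -A i k := Finset.sum_pos (fun i _ => by linarith [hNk i]) hne
      have h2 : ∑ i, -A i k = -sk := by rw [hsk_def]; simp
      rw [h2] at this; linarith
    set t : ℝ := sj / (sj - sk) with ht_def
    have hdenom : 0 < sj - sk := by linarith
    have ht0 : 0 < t := div_pos hsj hdenom
    have ht1 : t < 1 := by
      rw [ht_def, div_lt_one hdenom]
      linarith
    set x : Fin d → ℝ := t • (Pi.single k (1:ℝ) : Fin d → ℝ)
      + (1 - t) • (Pi.single j (1:ℝ) : Fin d → ℝ) with hx_def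
    have hxnn : ∀ i, 0 ≤ x i := by
      intro i
      have h1 : (0:ℝ) ≤ t * (Pi.single k (1:ℝ) : Fin d → ℝ) i :=
        mul_nonneg ht0.le (hsingle_nn k i)
      have h2 : (0:ℝ) ≤ (1 - t) * (Pi.single j (1:ℝ) : Fin d → ℝ) i :=
        mul_nonneg (by linarith) (hsingle_nn j i)
      show 0 ≤ t * (Pi.single k (1:ℝ) : Fin d → ℝ) i
        + (1 - t) * (Pi.single j (1:ℝ) : Fin d → ℝ) i
      linarith
    have hxj : x j = 1 - t := by
      show t * (Pi.single k (1:ℝ) : Fin d → ℝ) j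
        + (1 - t) * (Pi.single j (1:ℝ) : Fin d → ℝ) j = 1 - t
      rw [Pi.single_apply, Pi.single_apply, if_neg hjk, if_pos rfl]
      ring
    have hx0 : x ≠ 0 := by
      intro h
      have := congrFun h j
      rw [hxj] at this
      simp at this
      linarith
    have hmem : A *ᵥ x ∈ doubleCone d := hApos x hxnn hx0
    have hsumx : ∑ i, (A *ᵥ x) i = t * sk + (1 - t) * sj := by
      have hAx : A *ᵥ x = t • (A *ᵥ Pi.single k 1) + (1 - t) • (A *ᵥ Pi.single j 1) := by
        rw [hx_def, mulVec_add, mulVec_smul, mulVec_smul]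
      rw [hAx]
      have : ∀ i, (t • (A *ᵥ Pi.single k 1) + (1 - t) • (A *ᵥ Pi.single j 1)) i
          = t * A i k + (1 - t) * A i j := by
        intro i
        show t * (A *ᵥ Pi.single k (1:ℝ)) i + (1 - t) * (A *ᵥ Pi.single j (1:ℝ)) i = _
        rw [hcol i k, hcol i j]
      rw [Finset.sum_congr rfl fun i _ => this i, Finset.sum_add_distrib,
        ← Finset.mul_sum, ← Finset.mul_sum]
    have hzero : t * sk + (1 - t) * sj = 0 := by
      rw [ht_def]
      field_simp
      ring
    exact hsum0 _ hmem (by rw [hsumx, hzero])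
  by_cases hp : ∀ i j : Fin d, 0 < A i j
  · exact core hd A hp
  · have hn : ∀ i j : Fin d, A i j < 0 := by
      push_neg at hp
      obtain ⟨i₀, j₀, hij⟩ := hp
      have hN : ∀ i, A i j₀ < 0 := by
        rcases hPN j₀ with h | h
        · exact absurd (h i₀) (not_lt.mpr hij)
        · exact h
      intro i j
      rcases hPN j with h | h
      · exact absurd (hcontra j j₀ h hN) not_false
      · exact h i
    have hB : ∀ i j : Fin d, 0 < (-A) i j := by
      intro i j
      have := hn i j
      show 0 < -A i j
      linarith
    obtain ⟨H, hH, hW⟩ := core hd (-A) hB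
    refine ⟨H, hH, fun w hw => ?_⟩
    obtain ⟨n₀, hn₀⟩ := hW w hw
    refine ⟨n₀, fun n hgen => ?_⟩
    have h := hn₀ n hgen
    rcases Nat.even_or_odd n with he | ho
    · rwa [he.neg_pow A] at h
    · rw [ho.neg_pow A, neg_mulVec] at h
      have := neg_mem_doubleCone h
      rwa [neg_neg] at this

end
end
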